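/- arXiv:2104.06576 — 7 statements merged into one kernel-verified Lean document; each statement's English description precedes it below -/
import Mathlib

section
/- For all real numbers $v, t$ and any $1 \le p \le 2$, we have $|v+t|^p/2 + |v-t|^p/2 \le |v|^p + |t|^p$. -/
open NNReal

lemma nn_concave {p : ℝ} (hp1 : 1 ≤ p) (hp2 : p ≤ 2) (a b : ℝ≥0) :
    a ^ p / 2 + b ^ p / 2 ≤ ((a ^ 2 + b ^ 2) / 2) ^ (p / 2) := by
  have hp0 : 0 < p := lt_of_lt_of_le one_pos hp1
  have hq : 1 ≤ 2 / p := (one_le_div hp0).2 hp2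
  have h := NNReal.rpow_arith_mean_le_arith_mean2_rpow (1/2) (1/2) (a ^ p) (b ^ p)
    (by rw [← NNReal.coe_inj]; push_cast; norm_num) hq
  have h2 := NNReal.rpow_le_rpow h (by positivity : (0:ℝ) ≤ p / 2)
  rw [← NNReal.rpow_mul, ← NNReal.rpow_mul, ← NNReal.rpow_mul] at h2
  have e1 : 2 / p * (p / 2) = 1 := by field_simp
  have e2 : p * (2 / p) = 2 := by field_simp
  rw [e1, e2, NNReal.rpow_one] at h2
  calc a ^ p / 2 + b ^ p / 2 = 1/2 * a ^ p + 1/2 * b ^ p := by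
        rw [one_div, inv_mul_eq_div, inv_mul_eq_div]
    _ ≤ _ := h2
    _ = ((a ^ 2 + b ^ 2) / 2) ^ (p/2) := by
        congr 1
        rw [show ((2:ℝ)) = ((2:ℕ):ℝ) by norm_num, NNReal.rpow_natCast,
          NNReal.rpow_natCast, one_div, inv_mul_eq_div, inv_mul_eq_div, ← add_div]

lemma real_concave {p : ℝ} (hp1 : 1 ≤ p) (hp2 : p ≤ 2) {a b : ℝ}
    (ha : 0 ≤ a) (hb : 0 ≤ b) :
    a ^ p / 2 + b ^ p / 2 ≤ ((a ^ 2 + b ^ 2) / 2) ^ (p / 2) := by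
  lift a to ℝ≥0 using ha
  lift b to ℝ≥0 using hb
  exact_mod_cast nn_concave hp1 hp2 a b

lemma real_subadd {q : ℝ} (hq0 : 0 ≤ q) (hq1 : q ≤ 1) {a b : ℝ}
    (ha : 0 ≤ a) (hb : 0 ≤ b) : (a + b) ^ q ≤ a ^ q + b ^ q := by
  lift a to ℝ≥0 using ha
  lift b to ℝ≥0 using hb
  exact_mod_cast NNReal.rpow_add_le_add_rpow a b hq0 hq1

theorem stmt_0 (v t p : ℝ) (hp1 : 1 ≤ p) (hp2 : p ≤ 2) :
    |v + t| ^ p / 2 + |v - t| ^ p / 2 ≤ |v| ^ p + |t| ^ p := by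
  have h1 := real_concave hp1 hp2 (abs_nonneg (v + t)) (abs_nonneg (v - t))
  have h2 : (|v + t| ^ 2 + |v - t| ^ 2) / 2 = |v| ^ 2 + |t| ^ 2 := by
    rw [sq_abs, sq_abs, sq_abs, sq_abs]; ring
  rw [h2] at h1
  have h3 : (|v| ^ 2 + |t| ^ 2) ^ (p / 2) ≤ (|v| ^ 2) ^ (p / 2) + (|t| ^ 2) ^ (p / 2) :=
    real_subadd (by positivity) (by linarith) (by positivity) (by positivity)
  have h4 : ∀ x : ℝ, 0 ≤ x → (x ^ 2) ^ (p / 2) = x ^ p := by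
    intro x hx
    rw [← Real.rpow_natCast x 2, ← Real.rpow_mul hx]
    rw [show ((2:ℕ):ℝ) * (p/2) = p by push_cast; ring]
  rw [h4 _ (abs_nonneg v), h4 _ (abs_nonneg t)] at h3
  linarith
end

section
/- For any lattice $\mathcal{L} \subset \mathbb{R}^m$, any $1 \le p \le 2$, and any $\vec{t} \in \mathbb{R}^m$, the shifted supergaussian mass satisfies $f_p(\vec{t}) \cdot f_p(\mathcal{L}) \le f_p(\mathcal{L} + \vec{t})$, where $f_p(\vec{x}) := \exp(-\|\vec{x}\|_p^p)$ and $f_p(A) := \sum_{\vec{x} \in A} f_p(\vec{x})$ for a discrete set $A$. -/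
open scoped BigOperators

private lemma concave2 (q : ℝ) (hq0 : 0 < q) (hq1 : q ≤ 1) (x y : ℝ)
    (hx : 0 ≤ x) (hy : 0 ≤ y) : x ^ q + y ^ q ≤ 2 * ((x + y) / 2) ^ q := by
  have hP : (1:ℝ) ≤ 1 / q := (le_div_iff₀ hq0).2 (by linarith)
  have h := Real.arith_mean_le_rpow_mean (Finset.univ : Finset (Fin 2))
      ![1/2, 1/2] ![x ^ q, y ^ q]
      (by intro i _; fin_cases i <;> norm_num)
      (by simp [Fin.sum_univ_two]; norm_num)
      (by intro i _; fin_cases i <;> simp <;> positivity) hP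
  simp only [Fin.sum_univ_two, Matrix.cons_val_zero, Matrix.cons_val_one, Matrix.head_cons] at h
  have hxq : (x ^ q) ^ (1/q) = x := by
    rw [← Real.rpow_mul hx, mul_one_div, div_self hq0.ne']; exact Real.rpow_one x
  have hyq : (y ^ q) ^ (1/q) = y := by
    rw [← Real.rpow_mul hy, mul_one_div, div_self hq0.ne']; exact Real.rpow_one y
  rw [hxq, hyq, one_div_one_div] at h
  have he : 1 / 2 * x + 1 / 2 * y = (x + y) / 2 := by ring
  rw [he] at h
  linarith

private lemma rpow_subadd (q : ℝ) (hq0 : 0 ≤ q) (hq1 : q ≤ 1) (x y : ℝ)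
    (hx : 0 ≤ x) (hy : 0 ≤ y) : (x + y) ^ q ≤ x ^ q + y ^ q := by
  have h := NNReal.coe_le_coe.2 (NNReal.rpow_add_le_add_rpow x.toNNReal y.toNNReal hq0 hq1)
  simpa [NNReal.coe_rpow, ← Real.toNNReal_add hx hy, Real.coe_toNNReal x hx,
    Real.coe_toNNReal y hy, Real.coe_toNNReal (x+y) (by linarith)] using h

private lemma clarkson (p : ℝ) (hp1 : 1 ≤ p) (hp2 : p ≤ 2) (a b : ℝ) :
    |a + b| ^ p + |a - b| ^ p ≤ 2 * (|a| ^ p + |b| ^ p) := by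
  set q := p / 2 with hq
  have hq0 : 0 < q := by rw [hq]; linarith
  have hq1 : q ≤ 1 := by rw [hq]; linarith
  have habs : ∀ x : ℝ, |x| ^ p = (x ^ 2) ^ q := by
    intro x
    rw [← sq_abs x, ← Real.rpow_natCast |x| 2, ← Real.rpow_mul (abs_nonneg x)]
    congr 1; push_cast [hq]; ring
  rw [habs (a+b), habs (a-b), habs a, habs b]
  have h1 := concave2 q hq0 hq1 ((a+b)^2) ((a-b)^2) (sq_nonneg _) (sq_nonneg _)
  have h2 : ((a+b)^2 + (a-b)^2) / 2 = a^2 + b^2 := by ring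
  rw [h2] at h1
  have h3 := rpow_subadd q hq0.le hq1 (a^2) (b^2) (sq_nonneg _) (sq_nonneg _)
  linarith

private lemma exp_avg (u v : ℝ) : Real.exp ((u + v) / 2) ≤ (Real.exp u + Real.exp v) / 2 := by
  have h1 : Real.exp ((u + v) / 2) = Real.exp (u/2) * Real.exp (v/2) := by
    rw [← Real.exp_add]; ring_nf
  have h2 : Real.exp u = Real.exp (u/2) * Real.exp (u/2) := by
    rw [← Real.exp_add]; ring_nf
  have h3 : Real.exp v = Real.exp (v/2) * Real.exp (v/2) := by
    rw [← Real.exp_add]; ring_nf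
  nlinarith [sq_nonneg (Real.exp (u/2) - Real.exp (v/2))]
theorem stmt_1 (m k : ℕ) (p : ℝ) (hp1 : 1 ≤ p) (hp2 : p ≤ 2)
    (b : Fin k → (Fin m → ℝ)) (hb : LinearIndependent ℝ b)
    (L : Set (Fin m → ℝ)) (hL : L = {v | ∃ z : Fin k → ℤ, v = ∑ i, z i • b i})
    (t : Fin m → ℝ)
    (hsum : Summable (fun x : L => Real.exp (-(∑ i, |(x : Fin m → ℝ) i| ^ p))))
    (hsum' : Summable (fun x : L => Real.exp (-(∑ i, |((x : Fin m → ℝ) + t) i| ^ p)))) :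
    Real.exp (-(∑ i, |t i| ^ p)) * (∑' x : L, Real.exp (-(∑ i, |(x : Fin m → ℝ) i| ^ p)))
      ≤ ∑' x : L, Real.exp (-(∑ i, |((x : Fin m → ℝ) + t) i| ^ p)) := by
  set g : (Fin m → ℝ) → ℝ := fun v => Real.exp (-(∑ i, |v i| ^ p)) with hg
  have hneg : ∀ v ∈ L, -v ∈ L := by
    intro v hv
    rw [hL] at hv ⊢
    obtain ⟨z, hz⟩ := hv
    exact ⟨-z, by simp [hz, neg_smul]⟩
  let e : L ≃ L :=
    { toFun := fun x => ⟨-x.1, hneg _ x.2⟩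
      invFun := fun x => ⟨-x.1, hneg _ x.2⟩
      left_inv := fun x => by simp
      right_inv := fun x => by simp }
  have hsum'' : Summable (fun x : L => g (-(x : Fin m → ℝ) + t)) := by
    have := (e.summable_iff (f := fun x : L => g ((x : Fin m → ℝ) + t))).2 hsum'
    exact this
  have htsum_eq : ∑' x : L, g (-(x : Fin m → ℝ) + t) = ∑' x : L, g ((x : Fin m → ℝ) + t) :=
    e.tsum_eq (fun x : L => g ((x : Fin m → ℝ) + t))
  have key : ∀ v : Fin m → ℝ,
      Real.exp (-(∑ i, |t i| ^ p)) * g v ≤ (g (v + t) + g (-v + t)) / 2 := by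
    intro v
    set A := ∑ i, |v i + t i| ^ p with hA
    set B := ∑ i, |v i - t i| ^ p with hB
    set X := ∑ i, |v i| ^ p with hX
    set T := ∑ i, |t i| ^ p with hT
    have hAB : A + B ≤ 2 * (X + T) := by
      have h := Finset.sum_le_sum (f := fun i => |v i + t i| ^ p + |v i - t i| ^ p)
        (g := fun i => 2 * (|v i| ^ p + |t i| ^ p)) (s := Finset.univ)
        (fun i _ => clarkson p hp1 hp2 (v i) (t i))
      simpa [hA, hB, hX, hT, Finset.sum_add_distrib, Finset.mul_sum, mul_add] using h
    have hgvt : g (v + t) = Real.exp (-A) := by simp [hg, hA]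
    have hgmvt : g (-v + t) = Real.exp (-B) := by
      simp only [hg, hB]
      congr 1
      congr 1
      apply Finset.sum_congr rfl
      intro i _
      rw [Pi.add_apply, Pi.neg_apply]
      rw [show -v i + t i = -(v i - t i) by ring, abs_neg]
    have h1 : Real.exp (-T) * g v = Real.exp ((-A + -B) / 2 + ((A + B) / 2 - (X + T))) := by
      rw [hg]
      rw [← Real.exp_add]
      congr 1
      ring
    rw [hgvt, hgmvt, h1]
    calc Real.exp ((-A + -B) / 2 + ((A + B) / 2 - (X + T)))
        ≤ Real.exp ((-A + -B) / 2) := by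
          apply Real.exp_le_exp.2
          linarith
      _ ≤ (Real.exp (-A) + Real.exp (-B)) / 2 := exp_avg _ _
  have hgL : Summable (fun x : L => g (x : Fin m → ℝ)) := hsum
  have hright : Summable (fun x : L => (g ((x : Fin m → ℝ) + t) + g (-(x : Fin m → ℝ) + t)) / 2) :=
    (hsum'.add hsum'').div_const 2
  calc Real.exp (-(∑ i, |t i| ^ p)) * (∑' x : L, g (x : Fin m → ℝ))
      = ∑' x : L, Real.exp (-(∑ i, |t i| ^ p)) * g (x : Fin m → ℝ) := tsum_mul_left.symm
    _ ≤ ∑' x : L, (g ((x : Fin m → ℝ) + t) + g (-(x : Fin m → ℝ) + t)) / 2 :=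
        Summable.tsum_le_tsum (fun x => key x) (hgL.mul_left _) hright
    _ = ((∑' x : L, g ((x : Fin m → ℝ) + t)) + ∑' x : L, g (-(x : Fin m → ℝ) + t)) / 2 := by
        rw [tsum_div_const, Summable.tsum_add hsum' hsum'']
    _ = ∑' x : L, g ((x : Fin m → ℝ) + t) := by rw [htsum_eq]; ring
end

section
/- For any lattice $\mathcal{L} \subset \mathbb{R}^n$ with $n \ge 2$ and any nonzero $\vec{x} \in \mathcal{L}$, letting $\pi$ be the orthogonal projection onto the hyperplane orthogonal to $\vec{x}$, every nonzero vector of the projected lattice $\pi(\mathcal{L})$ has Euclidean norm at least $\frac{3}{4} \cdot \frac{\lambda_1^{(2)}(\mathcal{L})^2}{\|\vec{x}\|_2}$, i.e., $\lambda_1^{(2)}(\pi(\mathcal{L})) \ge \frac{3}{4} \cdot \frac{\lambda_1^{(2)}(\mathcal{L})^2}{\|\vec{x}\|_2}$. -/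
set_option maxHeartbeats 1000000 in
lemma stmt_2_key (A B C lam : ℝ) (hA : 0 < A) (hD : 0 < A * C - B ^ 2)
    (h : ∀ m k : ℤ, ¬(m = 0 ∧ k = 0) →
      lam ^ 2 ≤ A * (m : ℝ) ^ 2 + 2 * B * m * k + C * k ^ 2) :
    lam ^ 2 * lam ^ 2 ≤ 4 / 3 * (A * C - B ^ 2) := by
  set q : ℤ × ℤ → ℝ := fun v => A * (v.1 : ℝ) ^ 2 + 2 * B * v.1 * v.2 + C * v.2 ^ 2 with hq
  have hC : 0 < C := by nlinarith [sq_nonneg B]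
  have hone : ∀ m : ℤ, m ≠ 0 → (1 : ℝ) ≤ (m : ℝ) ^ 2 := by
    intro m hm
    have h1 : (1 : ℤ) ≤ |m| := Int.one_le_abs hm
    have h2 : (1 : ℝ) ≤ |(m : ℝ)| := by exact_mod_cast (by simpa using h1)
    nlinarith [abs_nonneg (m : ℝ), sq_abs (m : ℝ)]
  -- positivity of q on nonzero vectors
  have hpos : ∀ v : ℤ × ℤ, ¬(v.1 = 0 ∧ v.2 = 0) → 0 < q v := by
    rintro ⟨m, k⟩ hv
    rcases eq_or_ne k 0 with hk | hk
    · have hm : m ≠ 0 := fun hm => hv ⟨hm, hk⟩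
      have := hone m hm
      simp only [hq, hk]
      push_cast
      nlinarith
    · have := hone k hk
      have key : A * q (m, k) = (A * m + B * k) ^ 2 + (A * C - B ^ 2) * k ^ 2 := by
        simp only [hq]; ring
      nlinarith [sq_nonneg (A * (m:ℝ) + B * k)]
  -- bounds for finiteness
  have hqb : ∀ v : ℤ × ℤ, (A*C - B^2) * (v.1:ℝ)^2 ≤ C * q v ∧ (A*C - B^2) * (v.2:ℝ)^2 ≤ A * q v := by
    rintro ⟨m, k⟩
    constructor
    · have : C * q (m, k) = (B * m + C * k) ^ 2 + (A * C - B ^ 2) * m ^ 2 := by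
        simp only [hq]; ring
      nlinarith [sq_nonneg (B * (m:ℝ) + C * k)]
    · have : A * q (m, k) = (A * m + B * k) ^ 2 + (A * C - B ^ 2) * k ^ 2 := by
        simp only [hq]; ring
      nlinarith [sq_nonneg (A * (m:ℝ) + B * k)]
  -- minimum attained
  obtain ⟨v0, hv00, hv0le, hminT⟩ :
      ∃ v0 : ℤ × ℤ, ¬(v0.1 = 0 ∧ v0.2 = 0) ∧ q v0 ≤ q (1,0) ∧
        ∀ v : ℤ × ℤ, ¬(v.1 = 0 ∧ v.2 = 0) → q v ≤ q (1,0) → q v0 ≤ q v := by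
    set T : Set (ℤ × ℤ) := {v | ¬(v.1 = 0 ∧ v.2 = 0) ∧ q v ≤ q (1,0)} with hT
    obtain ⟨N, hN⟩ := exists_nat_ge (max (C * q (1,0) / (A*C - B^2)) (A * q (1,0) / (A*C - B^2)))
    have hfin : T.Finite := by
      apply Set.Finite.subset ((Set.finite_Icc (-(N:ℤ)) N).prod (Set.finite_Icc (-(N:ℤ)) N))
      rintro ⟨m, k⟩ ⟨hv0, hvle⟩
      have h1 := (hqb (m,k)).1
      have h2 := (hqb (m,k)).2
      have hm2 : (m:ℝ)^2 ≤ N := by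
        have : C * q (m,k) ≤ C * q (1,0) := by nlinarith
        have hb : C * q (1,0) / (A*C - B^2) ≤ N := le_trans (le_max_left _ _) hN
        rw [div_le_iff₀ hD] at hb
        nlinarith
      have hk2 : (k:ℝ)^2 ≤ N := by
        have : A * q (m,k) ≤ A * q (1,0) := by nlinarith
        have hb : A * q (1,0) / (A*C - B^2) ≤ N := le_trans (le_max_right _ _) hN
        rw [div_le_iff₀ hD] at hb
        nlinarith
      have hN2 : (N:ℝ) ≤ (N:ℝ)^2 := by exact_mod_cast Nat.cast_le.2 (Nat.le_self_pow two_ne_zero N)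
      constructor <;> constructor
      · have : -(N:ℝ) ≤ (m:ℝ) := by nlinarith [sq_nonneg ((m:ℝ) + N)]
        exact_mod_cast this
      · have : (m:ℝ) ≤ N := by nlinarith [sq_nonneg ((m:ℝ) - N)]
        exact_mod_cast this
      · have : -(N:ℝ) ≤ (k:ℝ) := by nlinarith [sq_nonneg ((k:ℝ) + N)]
        exact_mod_cast this
      · have : (k:ℝ) ≤ N := by nlinarith [sq_nonneg ((k:ℝ) - N)]
        exact_mod_cast this
    have hne : T.Nonempty := ⟨(1,0), by simp [hT]⟩
    obtain ⟨v0, hv0T, hmin⟩ := Set.exists_min_image T q hfin hne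
    exact ⟨v0, hv0T.1, hv0T.2, fun v h1 h2 => hmin v ⟨h1, h2⟩⟩
  have hglob : ∀ v : ℤ × ℤ, ¬(v.1 = 0 ∧ v.2 = 0) → q v0 ≤ q v := by
    intro v hv
    rcases le_or_gt (q v) (q (1,0)) with hle | hlt
    · exact hminT v hv hle
    · exact le_trans hv0le hlt.le
  obtain ⟨m0, k0⟩ := v0
  set μ := q (m0, k0) with hmu
  have hmupos : 0 < μ := hpos _ hv00
  -- gcd = 1
  have hgcd : Int.gcd m0 k0 = 1 := by
    set g : ℕ := Int.gcd m0 k0 with hg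
    obtain ⟨m1, hm1⟩ : ((g:ℤ) ∣ m0) := Int.gcd_dvd_left _ _
    obtain ⟨k1, hk1⟩ : ((g:ℤ) ∣ k0) := Int.gcd_dvd_right _ _
    have hg0 : g ≠ 0 := by
      intro h0
      rw [Int.gcd_eq_zero_iff] at h0
      exact hv00 h0
    have hv10 : ¬(m1 = 0 ∧ k1 = 0) := by
      rintro ⟨h1, h2⟩
      exact hv00 ⟨by show m0 = 0; rw [hm1, h1, mul_zero],
        by show k0 = 0; rw [hk1, h2, mul_zero]⟩
    have hsc : μ = (g:ℝ)^2 * q (m1, k1) := by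
      simp only [hmu, hq, hm1, hk1]
      push_cast
      ring
    have hle := hglob (m1, k1) hv10
    by_contra hne1
    have hg2 : 2 ≤ g := by omega
    have hg2r : (2:ℝ) ≤ (g:ℝ) := by exact_mod_cast hg2
    have h4 : (4:ℝ) ≤ (g:ℝ)^2 := by nlinarith
    have hmul := mul_le_mul_of_nonneg_left hle (sq_nonneg (g:ℝ))
    nlinarith
  -- Bezout
  obtain ⟨a, b, hab⟩ := (Int.isCoprime_iff_gcd_eq_one.mpr hgcd)
  -- reduction
  set β0 : ℝ := A * m0 * (-b) + B * (m0 * a + k0 * (-b)) + C * k0 * a with hb0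
  set s : ℤ := -round (β0 / μ) with hs
  set w : ℤ × ℤ := (-b + s * m0, a + s * k0) with hw
  have hdet : m0 * (a + s * k0) - k0 * (-b + s * m0) = 1 := by linear_combination hab
  have hw0 : ¬(w.1 = 0 ∧ w.2 = 0) := by
    rintro ⟨h1, h2⟩
    simp only [hw] at h1 h2
    rw [h1, h2] at hdet
    simp at hdet
  have hwge : μ ≤ q w := hglob w hw0
  have hbil : A * (m0:ℝ) * w.1 + B * (m0 * w.2 + k0 * w.1) + C * k0 * w.2 = β0 + s * μ := by
    simp only [hw, hmu, hq, hb0]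
    push_cast
    ring
  have habs : |β0 + s * μ| ≤ μ / 2 := by
    have heq : β0 + s * μ = μ * (β0 / μ - round (β0 / μ)) := by
      field_simp [hs]
      simp only [hs, div_eq_mul_inv]; push_cast; ring
    rw [heq, abs_mul, abs_of_pos hmupos]
    have := abs_sub_round (β0 / μ)
    calc μ * |β0 / μ - ↑(round (β0 / μ))| ≤ μ * (1/2) :=
          mul_le_mul_of_nonneg_left this hmupos.le
      _ = μ / 2 := by ring
  have hident : μ * q w - (β0 + s * μ)^2 =
      ((m0 * (a + s * k0) - k0 * (-b + s * m0) : ℤ) : ℝ)^2 * (A * C - B^2) := by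
    rw [← hbil]
    simp only [hmu, hq, hw]
    push_cast
    ring
  have hdetr : ((m0 * (a + s * k0) - k0 * (-b + s * m0) : ℤ) : ℝ) = 1 := by
    rw [hdet]; norm_num
  rw [hdetr] at hident
  have hb2 : (β0 + s * μ)^2 ≤ (μ/2)^2 := by
    have h1 := abs_le.1 habs
    nlinarith [h1.1, h1.2]
  clear_value q μ β0 s w
  have hDlb : 3/4 * (μ * μ) ≤ A * C - B^2 := by
    have hmul := mul_le_mul_of_nonneg_left hwge hmupos.le
    nlinarith
  have hlam : lam^2 ≤ μ := by
    have := h m0 k0 hv00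
    simpa [hmu, hq] using this
  have hfin : lam^2 * lam^2 ≤ μ * μ := mul_le_mul hlam hlam (sq_nonneg lam) hmupos.le
  linarith


theorem stmt_2 (n : ℕ) (hn : 2 ≤ n)
    (b : Fin n → EuclideanSpace ℝ (Fin n)) (hb : LinearIndependent ℝ b)
    (L : Set (EuclideanSpace ℝ (Fin n)))
    (hL : L = {v | ∃ z : Fin n → ℤ, v = ∑ i, z i • b i})
    (x : EuclideanSpace ℝ (Fin n)) (hx : x ∈ L) (hx0 : x ≠ 0)
    (lam : ℝ) (hlam : lam = sInf ((fun v => ‖v‖) '' {v | v ∈ L ∧ v ≠ 0}))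
    (y : EuclideanSpace ℝ (Fin n)) (hy : y ∈ L)
    (hpy : Submodule.orthogonalProjection ((Submodule.span ℝ {x})ᗮ) y ≠ 0) :
    3 / 4 * lam ^ 2 / ‖x‖ ≤
      ‖(Submodule.orthogonalProjection ((Submodule.span ℝ {x})ᗮ) y : EuclideanSpace ℝ (Fin n))‖ := by
  set K : Submodule ℝ (EuclideanSpace ℝ (Fin n)) := Submodule.span ℝ {x} with hK
  set p : EuclideanSpace ℝ (Fin n) := (Submodule.orthogonalProjection Kᗮ y : EuclideanSpace ℝ (Fin n)) with hp
  have hp0 : p ≠ 0 := by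
    intro h
    exact hpy (by exact_mod_cast Subtype.ext h)
  have hdecomp : ((Submodule.orthogonalProjection K y : EuclideanSpace ℝ (Fin n)) + (Submodule.orthogonalProjection Kᗮ y : EuclideanSpace ℝ (Fin n))) = y :=
    K.starProjection_add_starProjection_orthogonal y
  obtain ⟨t, ht⟩ := Submodule.mem_span_singleton.1
    (Submodule.coe_mem (Submodule.orthogonalProjection K y))
  have hy2 : y = t • x + p := by
    rw [← hdecomp, ht]
  have hxp : (inner ℝ x p : ℝ) = 0 := by
    have hmem : p ∈ Kᗮ := Submodule.coe_mem _
    have := (Submodule.mem_orthogonal K p).1 hmem x (Submodule.mem_span_singleton_self x)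
    simpa [real_inner_comm] using this
  have hxpos : (0:ℝ) < ‖x‖ := norm_pos_iff.2 hx0
  have hppos : (0:ℝ) < ‖p‖ := norm_pos_iff.2 hp0
  have hlam0 : 0 ≤ lam := by
    rw [hlam]
    apply Real.sInf_nonneg
    rintro r ⟨v, _, rfl⟩
    exact norm_nonneg v
  -- set up quadratic form coefficients
  have hall : ∀ m k : ℤ, ¬(m = 0 ∧ k = 0) →
      lam ^ 2 ≤ (‖x‖^2) * (m:ℝ)^2 + 2 * (t * ‖x‖^2) * m * k + (t^2 * ‖x‖^2 + ‖p‖^2) * k^2 := by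
    intro m k hmk
    set w : EuclideanSpace ℝ (Fin n) := (m:ℝ) • x + (k:ℝ) • y with hwdef
    have hwL : w ∈ L := by
      rw [hL]
      rw [hL] at hx hy
      obtain ⟨zx, hzx⟩ := hx
      obtain ⟨zy, hzy⟩ := hy
      refine ⟨fun i => m * zx i + k * zy i, ?_⟩
      rw [hwdef, hzx, hzy]
      rw [show ((m:ℝ)) • (∑ i, zx i • b i) = m • (∑ i, zx i • b i) from
        Int.cast_smul_eq_zsmul ℝ m _]
      rw [show ((k:ℝ)) • (∑ i, zy i • b i) = k • (∑ i, zy i • b i) from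
        Int.cast_smul_eq_zsmul ℝ k _]
      rw [Finset.smul_sum, Finset.smul_sum, ← Finset.sum_add_distrib]
      refine Finset.sum_congr rfl fun i _ => ?_
      rw [add_smul, smul_smul, smul_smul]
    have hw0 : w ≠ 0 := by
      intro h0
      rcases eq_or_ne k 0 with hk | hk
      · have hm : m ≠ 0 := fun hm => hmk ⟨hm, hk⟩
        rw [hwdef, hk] at h0
        simp only [Int.cast_zero, zero_smul, add_zero] at h0
        exact hx0 (by
          have : (m:ℝ) ≠ 0 := Int.cast_ne_zero.2 hm
          exact (smul_eq_zero.1 h0).resolve_left this)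
      · have hk' : (k:ℝ) ≠ 0 := Int.cast_ne_zero.2 hk
        have hyK : y ∈ K := by
          rw [hwdef] at h0
          have h2 : (k:ℝ) • y = (-(m:ℝ)) • x := by
            rw [neg_smul]
            exact eq_neg_of_add_eq_zero_right h0
          have h1 : y = ((k:ℝ)⁻¹ * (-(m:ℝ))) • x := by
            calc y = ((k:ℝ)⁻¹ * (k:ℝ)) • y := by rw [inv_mul_cancel₀ hk', one_smul]
              _ = (k:ℝ)⁻¹ • ((k:ℝ) • y) := by rw [mul_smul]
              _ = (k:ℝ)⁻¹ • ((-(m:ℝ)) • x) := by rw [h2]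
              _ = ((k:ℝ)⁻¹ * (-(m:ℝ))) • x := by rw [mul_smul]
          rw [h1, hK]
          exact Submodule.smul_mem _ _ (Submodule.mem_span_singleton_self x)
        have : Submodule.orthogonalProjection Kᗮ y = 0 :=
          Submodule.orthogonalProjectionOnto_apply_of_mem_orthogonal (K.le_orthogonal_orthogonal hyK)
        exact hpy this
    have hle : lam ≤ ‖w‖ := by
      rw [hlam]
      exact csInf_le ⟨0, by rintro r ⟨v, _, rfl⟩; exact norm_nonneg v⟩
        ⟨w, ⟨hwL, hw0⟩, rfl⟩
    have hw2 : w = ((m:ℝ) + (k:ℝ)*t) • x + (k:ℝ) • p := by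
      rw [hwdef, hy2]
      module
    have hnorm : ‖w‖^2 = ((m:ℝ) + (k:ℝ)*t)^2 * ‖x‖^2 + (k:ℝ)^2 * ‖p‖^2 := by
      rw [hw2, norm_add_sq_real]
      rw [real_inner_smul_left, real_inner_smul_right, hxp]
      rw [norm_smul, norm_smul]
      simp [mul_pow, sq_abs]
    have hsq : lam^2 ≤ ‖w‖^2 := by
      have := pow_le_pow_left₀ hlam0 hle 2
      simpa using this
    calc lam^2 ≤ ‖w‖^2 := hsq
      _ = (‖x‖^2) * (m:ℝ)^2 + 2 * (t * ‖x‖^2) * m * k + (t^2 * ‖x‖^2 + ‖p‖^2) * k^2 := by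
        rw [hnorm]; ring
  have hD : 0 < (‖x‖^2) * (t^2 * ‖x‖^2 + ‖p‖^2) - (t * ‖x‖^2)^2 := by
    have heq : (‖x‖^2) * (t^2 * ‖x‖^2 + ‖p‖^2) - (t * ‖x‖^2)^2 = ‖x‖^2 * ‖p‖^2 := by ring
    rw [heq]
    positivity
  have h4 := stmt_2_key (‖x‖^2) (t * ‖x‖^2) (t^2 * ‖x‖^2 + ‖p‖^2) lam (by positivity) hD hall
  have h4' : lam^2 * lam^2 ≤ 4/3 * (‖x‖^2 * ‖p‖^2) := by nlinarith
  rw [div_le_iff₀ hxpos]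
  nlinarith [mul_pos hxpos hppos, sq_nonneg lam, sq_nonneg (lam^2)]
end

section
/- For any lattice $\mathcal{L} \subset \mathbb{R}^m$, any real $c \ge 2$, radius $r > 0$, and symmetric convex body $\mathcal{K} \subset \mathbb{R}^m$, there exists $c^\dagger$ with $c/2 < c^\dagger \le c$ such that $\frac{|\mathcal{L} \cap c^\dagger r \mathcal{K}|}{|\mathcal{L} \cap (c^\dagger - 1) r \mathcal{K}|} \le 2^{\varepsilon m}$, where $\varepsilon = \frac{\log 5}{\lfloor c/2 \rfloor}$ (logarithm base 2). -/
open scoped Pointwise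
open Set MeasureTheory Module
open scoped ENNReal

-- basic facts about symmetric convex bodies
lemma aux_zero_mem {m : ℕ} {K : Set (Fin m → ℝ)} (hKconv : Convex ℝ K)
    (hKsymm : K = -K) (hne : K.Nonempty) : (0 : Fin m → ℝ) ∈ K := by
  obtain ⟨x, hx⟩ := hne
  have hnx : -x ∈ K := by rw [hKsymm]; exact Set.neg_mem_neg.mpr hx
  have := hKconv hx hnx (by norm_num : (0:ℝ) ≤ 1/2) (by norm_num : (0:ℝ) ≤ 1/2) (by norm_num)
  simpa using this

lemma aux_smul_mono {m : ℕ} {K : Set (Fin m → ℝ)} (hKconv : Convex ℝ K)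
    (h0K : (0 : Fin m → ℝ) ∈ K) {s t : ℝ} (hs : 0 ≤ s) (hst : s ≤ t) :
    s • K ⊆ t • K := by
  rcases eq_or_lt_of_le (hs.trans hst) with h | ht
  · have hs0 : s = 0 := le_antisymm (hst.trans h.symm.le) hs
    rw [hs0, ← h]
  rintro x ⟨k, hk, rfl⟩
  refine ⟨(s / t) • k, ?_, ?_⟩
  · have h1 : (0:ℝ) ≤ 1 - s / t := by
      rw [sub_nonneg]; exact (div_le_one ht).mpr hst
    have := hKconv hk h0K (div_nonneg hs ht.le) h1 (by ring)
    simpa using this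
  · show t • (s / t) • k = s • k
    rw [smul_smul, mul_div_cancel₀ _ ht.ne']

lemma aux_neg_mem {m : ℕ} {K : Set (Fin m → ℝ)} (hKsymm : K = -K) {s : ℝ}
    {x : Fin m → ℝ} (hx : x ∈ s • K) : -x ∈ s • K := by
  have : s • K = -(s • K) := by rw [← Set.smul_set_neg, ← hKsymm]
  rw [this]
  exact Set.neg_mem_neg.mpr hx

lemma count_lemma {m : ℕ} {K : Set (Fin m → ℝ)} (hKconv : Convex ℝ K)
    (hKcpt : IsCompact K) (hKsymm : K = -K) (hKint : (interior K).Nonempty)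
    {L : Set (Fin m → ℝ)} (h0L : (0 : Fin m → ℝ) ∈ L)
    (hLsub : ∀ x ∈ L, ∀ y ∈ L, x - y ∈ L)
    (hfin : ∀ s : ℝ, (L ∩ s • K).Finite)
    {a R : ℝ} (ha : 0 < a) (haR : a ≤ R) (hR2 : R ≤ 2 * a) :
    ((L ∩ R • K).ncard : ℝ) ≤ 5 ^ m * ((L ∩ a • K).ncard : ℝ) := by
  classical
  have h0K : (0 : Fin m → ℝ) ∈ K :=
    aux_zero_mem hKconv hKsymm (hKint.mono interior_subset)
  have h0aK : (0 : Fin m → ℝ) ∈ a • K := ⟨0, h0K, smul_zero a⟩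
  set S : Finset (Fin m → ℝ) := (hfin R).toFinset with hS
  set T : Finset (Fin m → ℝ) := (hfin a).toFinset with hT
  -- separated subsets
  set P : Finset (Finset (Fin m → ℝ)) :=
    S.powerset.filter (fun M => ∀ x ∈ M, ∀ y ∈ M, x ≠ y → x - y ∉ a • K) with hP
  have hPne : P.Nonempty := ⟨∅, by simp [hP]⟩
  obtain ⟨M, hMP, hMmax⟩ := Finset.exists_max_image P Finset.card hPne
  rw [hP, Finset.mem_filter, Finset.mem_powerset] at hMP
  obtain ⟨hMS, hMsep⟩ := hMP
  -- every element of S is close to M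
  have hcover : ∀ x ∈ S, ∃ y ∈ M, x - y ∈ a • K := by
    intro x hx
    by_contra hcon
    push_neg at hcon
    have hxM : x ∉ M := fun hxM => hcon x hxM (by simpa using h0aK)
    have hins : insert x M ∈ P := by
      rw [hP, Finset.mem_filter, Finset.mem_powerset]
      refine ⟨Finset.insert_subset hx hMS, ?_⟩
      intro u hu v hv huv
      rw [Finset.mem_insert] at hu hv
      obtain rfl | hu := hu
      · obtain rfl | hv := hv
        · exact absurd rfl huv
        · exact hcon v hv
      · obtain rfl | hv := hv
        · intro hmem
          exact hcon u hu (by simpa using aux_neg_mem hKsymm hmem)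
        · exact hMsep u hu v hv huv
    have := hMmax _ hins
    rw [Finset.card_insert_of_notMem hxM] at this
    omega
  -- |S| ≤ |M| * |T|
  have hST : S.card ≤ M.card * T.card := by
    have := Finset.card_le_card_of_injOn
      (f := fun x => if h : ∃ y ∈ M, x - y ∈ a • K then (h.choose, x - h.choose) else 0)
      (s := S) (t := M ×ˢ T) ?_ ?_
    · simpa [Finset.card_product] using this
    · intro x hx
      have h := hcover x hx
      simp only [dif_pos h]
      obtain ⟨hy, hxy⟩ := h.choose_spec
      have hxL : x ∈ L := by
        have := (hfin R).mem_toFinset.mp hx; exact this.1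
      have hyL : h.choose ∈ L := by
        have := (hfin R).mem_toFinset.mp (hMS hy); exact this.1
      refine Finset.mem_product.mpr ⟨hy, (hfin a).mem_toFinset.mpr ⟨hLsub x hxL _ hyL, hxy⟩⟩
    · intro x1 hx1 x2 hx2 heq
      have h1 := hcover x1 (by simpa using hx1)
      have h2 := hcover x2 (by simpa using hx2)
      simp only [dif_pos h1, dif_pos h2, Prod.mk.injEq] at heq
      obtain ⟨he1, he2⟩ := heq
      rw [he1] at he2
      exact sub_left_injective he2
  -- |M| ≤ 5 ^ m via volume
  have hMcard : (M.card : ℝ) ≤ 5 ^ m := by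
    set A : Set (Fin m → ℝ) := (a / 2) • K with hA
    have hAcpt : IsCompact A := hKcpt.smul _
    have hAmeas : MeasurableSet A := hAcpt.isClosed.measurableSet
    have hvpos : 0 < volume A := by
      apply MeasureTheory.Measure.measure_pos_of_nonempty_interior volume
      rw [hA, interior_smul₀ (by positivity : (a/2 : ℝ) ≠ 0)]
      exact hKint.smul_set
    have hvtop : volume A < ⊤ := hAcpt.measure_lt_top
    have hdisj : (M : Set (Fin m → ℝ)).PairwiseDisjoint (fun y => y +ᵥ A) := by
      intro y1 hy1 y2 hy2 hne
      refine Set.disjoint_left.mpr ?_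
      rintro z ⟨k1, hk1, rfl⟩ ⟨k2, hk2, hz⟩
      have h' : y2 + k2 = y1 + k1 := hz
      have hdiff : y1 - y2 = k2 - k1 := by
        rw [sub_eq_sub_iff_add_eq_add]
        exact h'.symm.trans (add_comm y2 k2)
      have : y1 - y2 ∈ a • K := by
        have hsum : A + A = a • K := by
          rw [hA, ← hKconv.add_smul (by positivity) (by positivity)]
          norm_num
        rw [← hsum, hdiff]
        exact ⟨k2, hk2, -k1, aux_neg_mem hKsymm hk1, by abel⟩ -- ok
      exact hMsep y1 hy1 y2 hy2 hne this
    have hsum : volume (⋃ y ∈ M, y +ᵥ A) = M.card * volume A := by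
      rw [measure_biUnion_finset hdisj (fun y _ => hAmeas.const_vadd y)]
      simp [measure_vadd, Finset.sum_const, nsmul_eq_mul]
    have hsub : (⋃ y ∈ M, y +ᵥ A) ⊆ (5 * (a / 2)) • K := by
      intro z hz
      simp only [Set.mem_iUnion] at hz
      obtain ⟨y, hy, hzy⟩ := hz
      obtain ⟨k, hk, rfl⟩ := hzy
      have hyR : y ∈ R • K := ((hfin R).mem_toFinset.mp (hMS hy)).2
      have : y +ᵥ k ∈ R • K + A := ⟨y, hyR, k, hk, rfl⟩
      have hadd : R • K + A = (R + a / 2) • K := by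
        rw [hA, ← hKconv.add_smul (by linarith) (by positivity)]
      rw [hadd] at this
      exact aux_smul_mono hKconv h0K (by linarith) (by linarith) this
    have hvol5 : volume ((5 * (a / 2)) • K) = ENNReal.ofReal (5 ^ m) * volume A := by
      rw [mul_smul, hA]
      rw [Measure.addHaar_smul_of_nonneg volume (by norm_num : (0:ℝ) ≤ 5)]
      congr 2
      rw [Module.finrank_fin_fun]
    have hle : (M.card : ℝ≥0∞) * volume A ≤ ENNReal.ofReal (5 ^ m) * volume A := by
      rw [← hsum, ← hvol5]
      exact measure_mono hsub
    have := (ENNReal.mul_le_mul_iff_left hvpos.ne' hvtop.ne).mp hle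
    rw [← ENNReal.ofReal_natCast] at this
    exact (ENNReal.ofReal_le_ofReal_iff (by positivity)).mp this
  -- conclude
  have hScard : (L ∩ R • K).ncard = S.card := Set.ncard_eq_toFinset_card _ (hfin R)
  have hTcard : (L ∩ a • K).ncard = T.card := Set.ncard_eq_toFinset_card _ (hfin a)
  rw [hScard, hTcard]
  calc (S.card : ℝ) ≤ (M.card : ℝ) * T.card := by exact_mod_cast hST
    _ ≤ 5 ^ m * T.card := by
        apply mul_le_mul_of_nonneg_right hMcard (Nat.cast_nonneg _)

theorem stmt_5 (m : ℕ) (c r : ℝ) (hc : 2 ≤ c) (hr : 0 < r)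
    (b : Fin m → (Fin m → ℝ)) (hb : LinearIndependent ℝ b)
    (L : Set (Fin m → ℝ)) (hL : L = {v | ∃ z : Fin m → ℤ, v = ∑ i, z i • b i})
    (K : Set (Fin m → ℝ)) (hKconv : Convex ℝ K) (hKcpt : IsCompact K)
    (hKsymm : K = -K) (hKint : (interior K).Nonempty)
    (ε : ℝ) (hε : ε = Real.logb 2 5 / (⌊c / 2⌋₊ : ℝ)) :
    ∃ cd : ℝ, c / 2 < cd ∧ cd ≤ c ∧
      ((L ∩ (cd * r) • K).ncard : ℝ) ≤
        (2 : ℝ) ^ (ε * m) * ((L ∩ ((cd - 1) * r) • K).ncard : ℝ) := by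
  classical
  rcases Nat.eq_zero_or_pos m with rfl | hm
  · -- degenerate case: the ambient space is a single point
    have h0K : (0 : Fin 0 → ℝ) ∈ K :=
      aux_zero_mem hKconv hKsymm (hKint.mono interior_subset)
    have h0L : (0 : Fin 0 → ℝ) ∈ L := by rw [hL]; exact ⟨0, by simp⟩
    refine ⟨c, by linarith, le_refl c, ?_⟩
    have hsing : ∀ s : ℝ, L ∩ s • K = {0} := by
      intro s
      apply Set.eq_singleton_iff_unique_mem.mpr
      exact ⟨⟨h0L, ⟨0, h0K, smul_zero _⟩⟩, fun x _ => Subsingleton.elim x 0⟩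
    rw [hsing, hsing, Set.ncard_singleton]
    norm_num
  haveI : Nonempty (Fin m) := ⟨⟨0, hm⟩⟩
  set n := ⌊c / 2⌋₊ with hn
  have hn1 : 1 ≤ n := Nat.le_floor (by push_cast; linarith)
  have hnc : (n : ℝ) ≤ c / 2 := Nat.floor_le (by linarith)
  have hcard : Fintype.card (Fin m) = finrank ℝ (Fin m → ℝ) := by
    simp [Module.finrank_fin_fun]
  set B : Basis (Fin m) ℝ (Fin m → ℝ) := basisOfLinearIndependentOfCardEqFinrank hb hcard
    with hBdef
  have hB : ⇑B = b := coe_basisOfLinearIndependentOfCardEqFinrank hb hcard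
  have hLspan : L = ↑(Submodule.span ℤ (Set.range b)) := by
    rw [hL]; ext x
    simp only [Set.mem_setOf_eq, SetLike.mem_coe, Submodule.mem_span_range_iff_exists_fun]
    constructor
    · rintro ⟨z, rfl⟩; exact ⟨z, rfl⟩
    · rintro ⟨z, rfl⟩; exact ⟨z, rfl⟩
  haveI hd : DiscreteTopology (↑(Submodule.span ℤ (Set.range b)) : Set (Fin m → ℝ)) := by
    rw [← hB]
    exact inferInstanceAs (DiscreteTopology (Submodule.span ℤ (Set.range ⇑B)))
  have hclosed : IsClosed (↑(Submodule.span ℤ (Set.range b)) : Set (Fin m → ℝ)) := by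
    rw [← hB, ← Submodule.coe_toAddSubgroup]
    exact AddSubgroup.isClosed_of_discrete
  have hfin : ∀ s : ℝ, (L ∩ s • K).Finite := by
    intro s
    rw [hLspan, Set.inter_comm]
    exact Metric.finite_isBounded_inter_isClosed DiscreteTopology.isDiscrete (hKcpt.smul s).isBounded hclosed
  have h0L : (0 : Fin m → ℝ) ∈ L := by
    rw [hLspan]; exact (Submodule.span ℤ (Set.range b)).zero_mem
  have hLsub : ∀ x ∈ L, ∀ y ∈ L, x - y ∈ L := by
    intro x hx y hy
    rw [hLspan] at hx hy ⊢
    exact (Submodule.span ℤ (Set.range b)).sub_mem hx hy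
  have h0K : (0 : Fin m → ℝ) ∈ K :=
    aux_zero_mem hKconv hKsymm (hKint.mono interior_subset)
  by_contra hcon
  push_neg at hcon
  set N : ℕ → ℝ := fun i => ((L ∩ ((c - ↑n + ↑i) * r) • K).ncard : ℝ) with hN
  have hpow_pos : (0:ℝ) < 2 ^ (ε * ↑m) := Real.rpow_pos_of_pos (by norm_num) _
  have hstep : ∀ i : ℕ, 1 ≤ i → i ≤ n → 2 ^ (ε * ↑m) * N (i - 1) < N i := by
    intro i h1 h2
    have hi1 : (1:ℝ) ≤ (i:ℝ) := by exact_mod_cast h1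
    have hin : (i:ℝ) ≤ (n:ℝ) := by exact_mod_cast h2
    have hcd1 : c / 2 < c - ↑n + ↑i := by linarith
    have hcd2 : c - ↑n + ↑i ≤ c := by linarith
    have hthis := hcon (c - ↑n + ↑i) hcd1 hcd2
    have hsub1 : (c - ↑n + ↑i) - 1 = c - ↑n + ↑(i - 1) := by
      have hcast : ((i - 1 : ℕ) : ℝ) = (i : ℝ) - 1 := by
        rw [Nat.cast_sub h1]; norm_num
      rw [hcast]; ring
    rw [hsub1] at hthis
    simp only [hN]
    exact hthis
  have hind : ∀ j : ℕ, 1 ≤ j → j ≤ n → ((2:ℝ) ^ (ε * ↑m)) ^ j * N 0 < N j := by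
    intro j
    induction j with
    | zero => intro h; omega
    | succ j ih =>
      intro _ hj
      rcases Nat.eq_zero_or_pos j with rfl | hj'
      · simpa [pow_one] using hstep 1 le_rfl (by omega)
      · have h1 := ih hj' (by omega)
        have h2 := hstep (j + 1) (by omega) hj
        simp only [Nat.add_sub_cancel] at h2
        calc ((2:ℝ) ^ (ε * ↑m)) ^ (j + 1) * N 0
            = 2 ^ (ε * ↑m) * (((2:ℝ) ^ (ε * ↑m)) ^ j * N 0) := by ring
          _ < 2 ^ (ε * ↑m) * N j := by
              exact mul_lt_mul_of_pos_left h1 hpow_pos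
          _ < N (j + 1) := h2
  have hN0 : 1 ≤ N 0 := by
    have hmem : (0 : Fin m → ℝ) ∈ L ∩ ((c - ↑n + ↑(0:ℕ)) * r) • K :=
      ⟨h0L, ⟨0, h0K, smul_zero _⟩⟩
    have hpos : 0 < (L ∩ ((c - ↑n + ↑(0:ℕ)) * r) • K).ncard :=
      (Set.ncard_pos (hfin _)).mpr ⟨0, hmem⟩
    simp only [hN]
    exact_mod_cast hpos
  have hcn : (0:ℝ) < c - ↑n := by linarith
  have hcount : N n ≤ 5 ^ m * N 0 := by
    have := count_lemma hKconv hKcpt hKsymm hKint h0L hLsub hfin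
      (a := (c - ↑n + ↑(0:ℕ)) * r) (R := (c - ↑n + ↑n) * r)
      (by push_cast; nlinarith) (by push_cast; nlinarith)
      (by push_cast; nlinarith)
    simpa only [hN] using this
  have hkey : ((2:ℝ) ^ (ε * ↑m)) ^ n = 5 ^ m := by
    have hn0 : (n:ℝ) ≠ 0 := Nat.cast_ne_zero.mpr (by omega)
    rw [← Real.rpow_natCast ((2:ℝ) ^ (ε * ↑m)) n, ← Real.rpow_mul (by norm_num)]
    have heq : ε * ↑m * ↑n = Real.logb 2 5 * m := by rw [hε]; field_simp
    rw [heq, Real.rpow_mul (by norm_num),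
      Real.rpow_logb (by norm_num) (by norm_num) (by norm_num)]
    exact Real.rpow_natCast 5 m
  have hfinal := hind n hn1 le_rfl
  rw [hkey] at hfinal
  linarith
end

section
/- For any $1 \le p \le q$ (with $q$ possibly $\infty$), $m \ge 1$, and real $\alpha \ge e$, the $\ell_p$ ball $m^{1/p - 1/q}\mathcal{B}_p^m$ can be covered by at most $(e^4 \alpha^p)^{m/\alpha^p}$ translated copies of $\alpha\mathcal{B}_q^m$. -/
open scoped ENNReal


noncomputable def rnd (y : ℝ) : ℤ := if 0 ≤ y then ⌊y⌋ else ⌈y⌉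

lemma rnd_abs_le (y : ℝ) : |(rnd y : ℝ)| ≤ |y| := by
  unfold rnd
  split_ifs with h
  · rw [abs_of_nonneg h, abs_of_nonneg (by exact_mod_cast Int.floor_nonneg.mpr h)]
    exact Int.floor_le y
  · push_neg at h
    rw [abs_of_neg h, abs_of_nonpos (by exact_mod_cast Int.ceil_le.mpr (by exact_mod_cast h.le : y ≤ ((0:ℤ):ℝ)))]
    simp only [neg_le_neg_iff]
    exact Int.le_ceil y

lemma rnd_dist_le (y : ℝ) : |y - (rnd y : ℝ)| ≤ 1 := by
  unfold rnd
  split_ifs with h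
  · rw [abs_of_nonneg (by linarith [Int.floor_le y])]
    linarith [Int.lt_floor_add_one y]
  · rw [abs_of_nonpos (by linarith [Int.le_ceil y])]
    linarith [Int.ceil_lt_add_one y]

lemma g_eq (γ : ℝ) (k : ℕ) :
    ∑ n ∈ Finset.Icc (-(k:ℤ)) (k:ℤ), γ ^ n.natAbs
      = 1 + 2 * ∑ j ∈ Finset.range k, γ ^ (j+1) := by
  induction k with
  | zero => simp
  | succ k ih =>
    have h1 : Finset.Icc (-((k+1:ℕ):ℤ)) ((k+1:ℕ):ℤ)
        = insert (-((k+1:ℕ):ℤ)) (insert ((k+1:ℕ):ℤ) (Finset.Icc (-(k:ℤ)) (k:ℤ))) := by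
      ext n; simp only [Finset.mem_Icc, Finset.mem_insert]; push_cast; omega
    rw [h1, Finset.sum_insert (by simp only [Finset.mem_insert, Finset.mem_Icc]; push_cast; omega),
      Finset.sum_insert (by simp only [Finset.mem_Icc]; push_cast; omega), ih,
      Finset.sum_range_succ]
    have h2 : ((-((k+1:ℕ):ℤ)).natAbs) = k+1 := by push_cast; omega
    have h3 : (((k+1:ℕ):ℤ)).natAbs = k+1 := by push_cast; omega
    rw [h2, h3]; ring

lemma count_le (m k : ℕ) (β : ℝ) (hβ : 2 ≤ β) :
    (((Fintype.piFinset fun _ : Fin m => Finset.Icc (-(k:ℤ)) (k:ℤ)).filter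
        (fun z => ∑ i, (z i).natAbs ≤ k)).card : ℝ)
      ≤ β ^ k * (1 + 2/(β-1)) ^ m := by
  have hβ0 : (0:ℝ) < β := by linarith
  have hβ1 : (1:ℝ) ≤ β := by linarith
  set γ : ℝ := β⁻¹ with hγ
  have hγ0 : 0 ≤ γ := by positivity
  have hγlt : γ < 1 := by
    rw [hγ, inv_lt_one_iff₀]; right; linarith
  set Z := (Fintype.piFinset fun _ : Fin m => Finset.Icc (-(k:ℤ)) (k:ℤ)).filter
      (fun z => ∑ i, (z i).natAbs ≤ k) with hZ
  have step1 : (Z.card : ℝ) ≤ ∑ z ∈ Z, β ^ k * ∏ i, γ ^ (z i).natAbs := by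
    rw [Finset.card_eq_sum_ones]
    push_cast
    apply Finset.sum_le_sum
    intro z hz
    have hzk : ∑ i, (z i).natAbs ≤ k := (Finset.mem_filter.mp hz).2
    rw [Finset.prod_pow_eq_pow_sum]
    have h1 : β ^ (∑ i, (z i).natAbs) ≤ β ^ k := pow_le_pow_right₀ hβ1 hzk
    have h2 : (0:ℝ) < β ^ (∑ i, (z i).natAbs) := by positivity
    rw [hγ, inv_pow, ← div_eq_mul_inv, le_div_iff₀ h2, one_mul]
    exact h1
  have step2 : ∑ z ∈ Z, β ^ k * ∏ i, γ ^ (z i).natAbs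
      ≤ ∑ z ∈ Fintype.piFinset (fun _ : Fin m => Finset.Icc (-(k:ℤ)) (k:ℤ)),
          β ^ k * ∏ i, γ ^ (z i).natAbs := by
    apply Finset.sum_le_sum_of_subset_of_nonneg (Finset.filter_subset _ _)
    intro z _ _; positivity
  have step3 : ∑ z ∈ Fintype.piFinset (fun _ : Fin m => Finset.Icc (-(k:ℤ)) (k:ℤ)),
      β ^ k * ∏ i, γ ^ (z i).natAbs
      = β ^ k * (∑ n ∈ Finset.Icc (-(k:ℤ)) (k:ℤ), γ ^ n.natAbs) ^ m := by
    have e1 : ((∑ n ∈ Finset.Icc (-(k:ℤ)) (k:ℤ), γ ^ n.natAbs) ^ m : ℝ)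
        = ∏ _i : Fin m, ∑ n ∈ Finset.Icc (-(k:ℤ)) (k:ℤ), γ ^ n.natAbs := by
      rw [Finset.prod_const, Finset.card_univ, Fintype.card_fin]
    rw [← Finset.mul_sum, e1, Finset.prod_univ_sum]
  have hg : ∑ n ∈ Finset.Icc (-(k:ℤ)) (k:ℤ), γ ^ n.natAbs ≤ 1 + 2/(β-1) := by
    rw [g_eq]
    have hsum : ∑ j ∈ Finset.range k, γ ^ (j+1) ≤ 1/(β-1) := by
      have h1 : ∑ j ∈ Finset.range k, γ ^ (j+1) = γ * ∑ j ∈ Finset.range k, γ ^ j := by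
        rw [Finset.mul_sum]; exact Finset.sum_congr rfl fun j _ => by ring
      have h2 : ∑ j ∈ Finset.range k, γ ^ j ≤ 1/(1-γ) := by
        have he : ∑ j ∈ Finset.range k, γ ^ j = (γ ^ k - 1) / (γ - 1) :=
          geom_sum_eq (by linarith : γ ≠ 1) k
        have he2 : (γ ^ k - 1) / (γ - 1) = (1 - γ ^ k) / (1 - γ) := by
          rw [← neg_div_neg_eq]; ring_nf
        rw [he, he2, div_le_div_iff₀ (by linarith) (by linarith)]
        have : (0:ℝ) ≤ γ ^ k := by positivity
        nlinarith
      have h3 : γ * (1/(1-γ)) = 1/(β-1) := by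
        rw [hγ]
        field_simp
      calc ∑ j ∈ Finset.range k, γ ^ (j+1) = γ * ∑ j ∈ Finset.range k, γ ^ j := h1
        _ ≤ γ * (1/(1-γ)) := by
            apply mul_le_mul_of_nonneg_left h2 hγ0
        _ = 1/(β-1) := h3
    have : (2:ℝ)/(β-1) = 2 * (1/(β-1)) := by ring
    linarith
  calc (Z.card : ℝ) ≤ ∑ z ∈ Z, β ^ k * ∏ i, γ ^ (z i).natAbs := step1
    _ ≤ _ := step2
    _ = β ^ k * (∑ n ∈ Finset.Icc (-(k:ℤ)) (k:ℤ), γ ^ n.natAbs) ^ m := step3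
    _ ≤ β ^ k * (1 + 2/(β-1)) ^ m := by
        apply mul_le_mul_of_nonneg_left _ (by positivity)
        apply pow_le_pow_left₀ _ hg
        apply Finset.sum_nonneg; intro n _; positivity

noncomputable def lpnorm (q : ℝ≥0∞) {m : ℕ} (x : Fin m → ℝ) : ℝ :=
  if q = ⊤ then ⨆ i, |x i| else (∑ i, |x i| ^ q.toReal) ^ (1 / q.toReal)

theorem stmt_9 (m : ℕ) (hm : 1 ≤ m) (p : ℝ) (q : ℝ≥0∞) (hp : 1 ≤ p)
    (hpq : ENNReal.ofReal p ≤ q) (α : ℝ) (hα : Real.exp 1 ≤ α) :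
    ∃ C : Finset (Fin m → ℝ),
      ((C.card : ℝ) ≤ (Real.exp 4 * α ^ p) ^ ((m : ℝ) / α ^ p)) ∧
      ∀ x : Fin m → ℝ, lpnorm (ENNReal.ofReal p) x ≤ (m : ℝ) ^ (1 / p - (1 / q).toReal) →
        ∃ c ∈ C, lpnorm q (x - c) ≤ α := by
  have he2 : (2:ℝ) ≤ Real.exp 1 := by linarith [Real.add_one_le_exp 1]
  have hα2 : (2:ℝ) ≤ α := le_trans he2 hα
  have hα0 : (0:ℝ) < α := by linarith
  have hα1 : (1:ℝ) ≤ α := by linarith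
  have hp0 : (0:ℝ) < p := by linarith
  set β := α ^ p with hβdef
  have hβ2 : (2:ℝ) ≤ β := by
    calc (2:ℝ) ≤ α := hα2
      _ = α ^ (1:ℝ) := (Real.rpow_one α).symm
      _ ≤ α ^ p := Real.rpow_le_rpow_of_exponent_le hα1 hp
  have hβ0 : (0:ℝ) < β := by linarith
  have hβ1 : (1:ℝ) ≤ β := by linarith
  set qr := (1/q).toReal with hqr
  have hqr0 : (0:ℝ) ≤ qr := ENNReal.toReal_nonneg
  have hm0 : (0:ℝ) < m := by exact_mod_cast hm
  have hmq : (0:ℝ) < (m:ℝ) ^ qr := Real.rpow_pos_of_pos hm0 qr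
  set lam := α / (m:ℝ) ^ qr with hlam
  have hlam0 : (0:ℝ) < lam := div_pos hα0 hmq
  set s := (m:ℝ) / β with hs
  have hs0 : (0:ℝ) ≤ s := by positivity
  set k := ⌊s⌋₊ with hk
  set Z := (Fintype.piFinset fun _ : Fin m => Finset.Icc (-(k:ℤ)) (k:ℤ)).filter
      (fun z => ∑ i, (z i).natAbs ≤ k) with hZ
  refine ⟨Z.image (fun z => fun i => lam * (z i : ℝ)), ?_, ?_⟩
  · -- cardinality bound
    have h1 : ((Z.image (fun z => fun i => lam * (z i : ℝ))).card : ℝ) ≤ (Z.card : ℝ) :=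
      Nat.cast_le.mpr Finset.card_image_le
    have h2 : (Z.card : ℝ) ≤ β ^ k * (1 + 2/(β-1)) ^ m := count_le m k β hβ2
    have h3 : β ^ k ≤ β ^ s := by
      rw [← Real.rpow_natCast β k]
      exact Real.rpow_le_rpow_of_exponent_le hβ1 (Nat.floor_le hs0)
    have hbase : (0:ℝ) ≤ 1 + 2/(β-1) := by
      have hb1 : (0:ℝ) < β - 1 := by linarith
      positivity
    have h4 : (1 + 2/(β-1)) ^ m ≤ Real.exp (4 * s) := by
      have hb : 1 + 2/(β-1) ≤ Real.exp (4/β) := by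
        have hx1 : 4/β + 1 ≤ Real.exp (4/β) := Real.add_one_le_exp _
        have hx2 : 2/(β-1) ≤ 4/β := by
          rw [div_le_div_iff₀ (by linarith) (by linarith)]
          nlinarith
        linarith
      calc (1 + 2/(β-1)) ^ m ≤ (Real.exp (4/β)) ^ m := by
            apply pow_le_pow_left₀ hbase hb
        _ = Real.exp ((m:ℝ) * (4/β)) := by rw [← Real.exp_nat_mul]
        _ = Real.exp (4 * s) := by rw [hs]; ring_nf
    have h5 : (Real.exp 4 * β) ^ s = β ^ s * Real.exp (4 * s) := by
      rw [Real.mul_rpow (Real.exp_pos 4).le hβ0.le, ← Real.exp_one_rpow (4:ℝ),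
        ← Real.rpow_mul (Real.exp_pos 1).le, Real.exp_one_rpow, mul_comm]
    calc ((Z.image (fun z => fun i => lam * (z i : ℝ))).card : ℝ)
        ≤ (Z.card : ℝ) := h1
      _ ≤ β ^ k * (1 + 2/(β-1)) ^ m := h2
      _ ≤ β ^ s * Real.exp (4 * s) := by
          apply mul_le_mul h3 h4 (by positivity) (by positivity)
      _ = (Real.exp 4 * β) ^ s := h5.symm
  · -- coverage
    intro x hx
    set z : Fin m → ℤ := fun i => rnd (x i / lam) with hzdef
    -- hypothesis unfolding
    rw [lpnorm, if_neg ENNReal.ofReal_ne_top, ENNReal.toReal_ofReal hp0.le] at hx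
    have hSnn : (0:ℝ) ≤ ∑ i, |x i| ^ p := by
      apply Finset.sum_nonneg; intro i _; positivity
    have hS : ∑ i, |x i| ^ p ≤ (m:ℝ) ^ (1 - qr * p) := by
      have h1 := Real.rpow_le_rpow (by positivity) hx hp0.le
      have e1 : ((∑ i, |x i| ^ p) ^ (1/p)) ^ p = ∑ i, |x i| ^ p := by
        rw [← Real.rpow_mul hSnn, one_div, inv_mul_cancel₀ hp0.ne', Real.rpow_one]
      have e2 : (((m:ℝ) ^ (1/p - qr)) ^ p) = (m:ℝ) ^ (1 - qr * p) := by
        rw [← Real.rpow_mul hm0.le]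
        congr 1
        field_simp
      rwa [e1, e2] at h1
    have hlamp : lam ^ p = β / (m:ℝ) ^ (qr * p) := by
      rw [hlam, Real.div_rpow hα0.le hmq.le, ← Real.rpow_mul hm0.le]
    -- per-coordinate bounds
    have habs_le : ∀ i, |(z i : ℝ)| ≤ |x i| / lam := by
      intro i
      have := rnd_abs_le (x i / lam)
      rwa [abs_div, abs_of_pos hlam0] at this
    have hzsum : (∑ i, ((z i).natAbs : ℝ)) ≤ s := by
      have step1 : ∀ i, ((z i).natAbs : ℝ) ≤ |(z i : ℝ)| ^ p := by
        intro i
        have hcast : ((z i).natAbs : ℝ) = |(z i : ℝ)| := by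
          rw [Nat.cast_natAbs]; push_cast; ring
        rw [hcast]
        rcases eq_or_ne (z i) 0 with h | h
        · simp [h, Real.zero_rpow hp0.ne']
        · have h1 : (1:ℝ) ≤ |(z i : ℝ)| := by
            have : (1:ℤ) ≤ |z i| := Int.one_le_abs h
            calc (1:ℝ) = ((1:ℤ):ℝ) := by norm_num
              _ ≤ ((|z i|:ℤ):ℝ) := by exact_mod_cast this
              _ = |(z i : ℝ)| := by push_cast; ring
          calc |(z i:ℝ)| = |(z i:ℝ)| ^ (1:ℝ) := (Real.rpow_one _).symm
            _ ≤ |(z i:ℝ)| ^ p := Real.rpow_le_rpow_of_exponent_le h1 hp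
      have step2 : ∀ i, |(z i : ℝ)| ^ p ≤ |x i| ^ p / lam ^ p := by
        intro i
        rw [← Real.div_rpow (abs_nonneg _) hlam0.le]
        exact Real.rpow_le_rpow (abs_nonneg _) (habs_le i) hp0.le
      calc ∑ i, ((z i).natAbs : ℝ) ≤ ∑ i, |x i| ^ p / lam ^ p :=
            Finset.sum_le_sum fun i _ => le_trans (step1 i) (step2 i)
        _ = (∑ i, |x i| ^ p) / lam ^ p := by rw [Finset.sum_div]
        _ ≤ (m:ℝ) ^ (1 - qr * p) / lam ^ p := by
            apply div_le_div_of_nonneg_right hS (by positivity)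
        _ = s := by
            rw [hlamp, div_div_eq_mul_div, ← Real.rpow_add hm0]
            have he : 1 - qr * p + qr * p = 1 := by ring
            rw [he, Real.rpow_one, hs]
    have hzsumN : ∑ i, (z i).natAbs ≤ k := by
      apply Nat.le_floor
      push_cast
      exact_mod_cast hzsum
    have hzZ : z ∈ Z := by
      rw [hZ, Finset.mem_filter]
      refine ⟨?_, hzsumN⟩
      rw [Fintype.mem_piFinset]
      intro i
      rw [Finset.mem_Icc]
      have h1 : (z i).natAbs ≤ k :=
        le_trans (Finset.single_le_sum (f := fun i => (z i).natAbs)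
          (fun i _ => Nat.zero_le _) (Finset.mem_univ i)) hzsumN
      omega
    refine ⟨fun i => lam * (z i : ℝ), Finset.mem_image_of_mem _ hzZ, ?_⟩
    have hdist : ∀ i, |x i - lam * (z i : ℝ)| ≤ lam := by
      intro i
      have h1 := rnd_dist_le (x i / lam)
      have h2 : x i - lam * (z i:ℝ) = lam * (x i / lam - (z i:ℝ)) := by
        field_simp
      rw [h2, abs_mul, abs_of_pos hlam0]
      calc lam * |x i / lam - (z i:ℝ)| ≤ lam * 1 :=
            mul_le_mul_of_nonneg_left h1 hlam0.le
        _ = lam := mul_one lam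
    by_cases hq : q = ⊤
    · subst hq
      rw [lpnorm, if_pos rfl]
      have hqr' : qr = 0 := by rw [hqr]; simp
      have hlam' : lam = α := by rw [hlam, hqr', Real.rpow_zero, div_one]
      haveI : Nonempty (Fin m) := ⟨⟨0, hm⟩⟩
      apply ciSup_le
      intro i
      calc |(x - fun i => lam * (z i:ℝ)) i| = |x i - lam * (z i:ℝ)| := by
            simp [Pi.sub_apply]
        _ ≤ lam := hdist i
        _ = α := hlam'
    · rw [lpnorm, if_neg hq]
      set qt := q.toReal with hqt
      have hqt1 : 1 ≤ qt := by
        have h1 := (ENNReal.toReal_le_toReal ENNReal.ofReal_ne_top hq).mpr hpq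
        rw [ENNReal.toReal_ofReal hp0.le] at h1
        linarith
      have hqt0 : 0 < qt := by linarith
      have hqr' : qr = 1 / qt := by
        rw [hqr, one_div, one_div, ENNReal.toReal_inv, hqt]
      have hmq' : (0:ℝ) < (m:ℝ) ^ (1/qt) := Real.rpow_pos_of_pos hm0 _
      have hsum2 : ∑ i, |(x - fun i => lam * (z i:ℝ)) i| ^ qt ≤ (m:ℝ) * lam ^ qt := by
        calc ∑ i, |(x - fun i => lam*(z i:ℝ)) i| ^ qt ≤ ∑ _i : Fin m, lam ^ qt := by
              apply Finset.sum_le_sum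
              intro i _
              apply Real.rpow_le_rpow (abs_nonneg _) _ hqt0.le
              simpa [Pi.sub_apply] using hdist i
          _ = (m:ℝ) * lam ^ qt := by
              rw [Finset.sum_const, Finset.card_univ, Fintype.card_fin, nsmul_eq_mul]
      calc (∑ i, |(x - fun i => lam*(z i:ℝ)) i| ^ qt) ^ (1/qt)
          ≤ ((m:ℝ) * lam ^ qt) ^ (1/qt) := by
            apply Real.rpow_le_rpow ?_ hsum2 (by positivity)
            apply Finset.sum_nonneg
            intro i _
            positivity
        _ = (m:ℝ) ^ (1/qt) * lam := by
            rw [Real.mul_rpow hm0.le (by positivity), ← Real.rpow_mul hlam0.le,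
              mul_one_div_cancel hqt0.ne', Real.rpow_one]
        _ = α := by
            rw [hlam, hqr']
            field_simp
end

section
/- Fix a prime $Q \ge 2$ and vectors $\vec{v}_1, \ldots, \vec{v}_N, \vec{y}_1, \ldots, \vec{y}_N \in \mathbb{Z}_Q^n$ with $\vec{v}_i \ne \vec{0}$ for all $i$ and $\vec{y}_i \ne \vec{y}_1$ for all $i > 1$. If $\vec{z}, \vec{c} \in \mathbb{Z}_Q^n$ are sampled uniformly and independently, then the probability that $\langle \vec{z}, \vec{y}_1 + \vec{c} \rangle = 0$, and $\langle \vec{z}, \vec{v}_i \rangle \ne 0$ for all $i$, and $\langle \vec{z}, \vec{y}_i + \vec{c} \rangle \ne 0$ for all $i > 1$ (all mod $Q$) lies between $\frac{1}{Q} - \frac{2N}{Q^2} - \frac{N}{Q^n}$ and $\frac{1}{Q} + \frac{1}{Q^n}$. -/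
open Finset

lemma card_fun_eq {Q n : ℕ} [NeZero Q] : Fintype.card (Fin n → ZMod Q) = Q ^ n := by
  simp [Fintype.card_fun, ZMod.card]

lemma card_fiber {Q n : ℕ} [NeZero Q] (hQ : Q.Prime) (w : Fin n → ZMod Q) (hw : w ≠ 0) (a : ZMod Q) :
    (univ.filter fun z : Fin n → ZMod Q => ∑ j, z j * w j = a).card = Q ^ (n - 1) := by
  classical
  haveI := Fact.mk hQ
  obtain ⟨j0, hj0⟩ : ∃ j, w j ≠ 0 := by
    by_contra h; push_neg at h; exact hw (funext h)
  have hn : n ≠ 0 := by rintro rfl; exact j0.elim0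
  have key : ∀ a b : ZMod Q,
      (univ.filter fun z : Fin n → ZMod Q => ∑ j, z j * w j = a).card ≤
      (univ.filter fun z : Fin n → ZMod Q => ∑ j, z j * w j = b).card := by
    intro a b
    apply Finset.card_le_card_of_injOn (fun z : Fin n → ZMod Q => z + (Pi.single j0 ((b - a) * (w j0)⁻¹) : Fin n → ZMod Q))
    · intro z hz
      simp only [mem_coe, mem_filter, mem_univ, true_and] at hz ⊢
      have h1 : ∑ j, (z + (Pi.single j0 ((b - a) * (w j0)⁻¹) : Fin n → ZMod Q)) j * w j
          = (∑ j, z j * w j) + ∑ j, (Pi.single j0 ((b - a) * (w j0)⁻¹) : Fin n → ZMod Q) j * w j := by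
        rw [← Finset.sum_add_distrib]
        exact Finset.sum_congr rfl fun j _ => by simp [add_mul]
      have h2 : ∑ j, (Pi.single j0 ((b - a) * (w j0)⁻¹) : Fin n → ZMod Q) j * w j
          = (b - a) * (w j0)⁻¹ * w j0 := by
        rw [Fintype.sum_eq_single j0 fun j hj => by simp [Pi.single_eq_of_ne hj]]
        simp
      rw [h1, h2, hz, inv_mul_cancel_right₀ hj0]
      ring
    · intro x _ y _ hxy
      exact add_left_injective _ hxy
  have heq : ∀ b : ZMod Q, (univ.filter fun z : Fin n → ZMod Q => ∑ j, z j * w j = b).card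
      = (univ.filter fun z : Fin n → ZMod Q => ∑ j, z j * w j = a).card :=
    fun b => le_antisymm (key b a) (key a b)
  have hsum : (univ : Finset (Fin n → ZMod Q)).card
      = ∑ b : ZMod Q, (univ.filter fun z : Fin n → ZMod Q => ∑ j, z j * w j = b).card :=
    Finset.card_eq_sum_card_fiberwise fun x _ => mem_univ _
  simp only [heq, Finset.sum_const, card_univ, card_fun_eq, ZMod.card, smul_eq_mul] at hsum
  have hpow : Q ^ n = Q * Q ^ (n - 1) := by
    conv_lhs => rw [show n = (n - 1) + 1 from (Nat.succ_pred_eq_of_pos (Nat.pos_of_ne_zero hn)).symm]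
    rw [pow_succ]; ring
  rw [hpow] at hsum
  exact (Nat.eq_of_mul_eq_mul_left hQ.pos hsum).symm

section
variable {Q n : ℕ}

lemma card_cond1 [NeZero Q] (hQ : Q.Prime) (z u : Fin n → ZMod Q) (hz : z ≠ 0) :
    (univ.filter fun c : Fin n → ZMod Q => ∑ j, z j * (u j + c j) = 0).card = Q ^ (n - 1) := by
  classical
  have hiff : ∀ c : Fin n → ZMod Q,
      (∑ j, z j * (u j + c j) = 0) ↔ (∑ j, c j * z j = -(∑ j, z j * u j)) := by
    intro c
    have hexp : ∑ j, z j * (u j + c j) = (∑ j, z j * u j) + ∑ j, c j * z j := by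
      rw [← Finset.sum_add_distrib]
      exact Finset.sum_congr rfl fun j _ => by ring
    rw [hexp, add_comm, add_eq_zero_iff_eq_neg]
  rw [Finset.filter_congr fun c _ => hiff c]
  exact card_fiber hQ z hz _

lemma card_prod_filter {α β : Type*} [Fintype α] [Fintype β] (P : α × β → Prop) [DecidablePred P] :
    (univ.filter P).card = ∑ a : α, (univ.filter fun b => P (a, b)).card := by
  simp_rw [Finset.card_filter]
  exact Fintype.sum_prod_type _
end

theorem stmt_12 (Q n N : ℕ) (hQ : Q.Prime) (hN : 0 < N)
    (v y : Fin N → Fin n → ZMod Q)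
    (hv : ∀ i, v i ≠ 0)
    (hy : ∀ i : Fin N, i ≠ ⟨0, hN⟩ → y i ≠ y ⟨0, hN⟩) :
    (1 / Q - 2 * N / Q ^ 2 - N / Q ^ n : ℝ) ≤
        (Nat.card {zc : (Fin n → ZMod Q) × (Fin n → ZMod Q) //
          (∑ j, zc.1 j * (y ⟨0, hN⟩ j + zc.2 j)) = 0 ∧
          (∀ i, (∑ j, zc.1 j * v i j) ≠ 0) ∧
          ∀ i : Fin N, i ≠ ⟨0, hN⟩ → (∑ j, zc.1 j * (y i j + zc.2 j)) ≠ 0} : ℝ)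
          / (Q ^ n * Q ^ n) ∧
      (Nat.card {zc : (Fin n → ZMod Q) × (Fin n → ZMod Q) //
          (∑ j, zc.1 j * (y ⟨0, hN⟩ j + zc.2 j)) = 0 ∧
          (∀ i, (∑ j, zc.1 j * v i j) ≠ 0) ∧
          ∀ i : Fin N, i ≠ ⟨0, hN⟩ → (∑ j, zc.1 j * (y i j + zc.2 j)) ≠ 0} : ℝ)
          / (Q ^ n * Q ^ n) ≤ 1 / Q + 1 / Q ^ n := by
  classical
  haveI := Fact.mk hQ
  haveI : NeZero Q := ⟨hQ.ne_zero⟩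
  set i0 : Fin N := ⟨0, hN⟩ with hi0
  have hn : n ≠ 0 := by
    rintro rfl
    exact hv i0 (funext fun j => j.elim0)
  set P : (Fin n → ZMod Q) × (Fin n → ZMod Q) → Prop := fun zc =>
    (∑ j, zc.1 j * (y i0 j + zc.2 j)) = 0 ∧ (∀ i, (∑ j, zc.1 j * v i j) ≠ 0) ∧
      ∀ i : Fin N, i ≠ i0 → (∑ j, zc.1 j * (y i j + zc.2 j)) ≠ 0 with hP
  set K : ℕ := Q ^ (n - 1) with hK
  have hcard : Nat.card {zc : (Fin n → ZMod Q) × (Fin n → ZMod Q) //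
          (∑ j, zc.1 j * (y i0 j + zc.2 j)) = 0 ∧
          (∀ i, (∑ j, zc.1 j * v i j) ≠ 0) ∧
          ∀ i : Fin N, i ≠ i0 → (∑ j, zc.1 j * (y i j + zc.2 j)) ≠ 0}
        = (univ.filter P).card := by
    rw [Nat.card_eq_fintype_card]
    convert Fintype.card_subtype P
  rw [hcard]
  -- exact count of the first condition for nonzero z
  have hc1 : ∀ z : Fin n → ZMod Q, z ≠ 0 →
      (univ.filter fun c : Fin n → ZMod Q => ∑ j, z j * (y i0 j + c j) = 0).card = K :=
    fun z hz => card_cond1 hQ z (y i0) hz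
  -- upper bound in ℕ
  have hupper : (univ.filter P).card ≤ Q ^ n * K + Q ^ n := by
    rw [card_prod_filter]
    have hstep : ∀ z : Fin n → ZMod Q,
        (univ.filter fun c => P (z, c)).card ≤ K + if z = 0 then Q ^ n else 0 := by
      intro z
      by_cases hz : z = 0
      · simp only [hz, if_pos rfl]
        calc (univ.filter fun c => P ((0 : Fin n → ZMod Q), c)).card
            ≤ (univ : Finset (Fin n → ZMod Q)).card := card_filter_le _ _
          _ = Q ^ n := by rw [card_univ, card_fun_eq]
          _ ≤ K + Q ^ n := Nat.le_add_left _ _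
      · simp only [if_neg hz, add_zero]
        calc (univ.filter fun c => P (z, c)).card
            ≤ (univ.filter fun c : Fin n → ZMod Q => ∑ j, z j * (y i0 j + c j) = 0).card := by
              apply Finset.card_le_card
              intro c hc
              simp only [mem_filter, mem_univ, true_and] at hc ⊢
              exact hc.1
          _ = K := hc1 z hz
    calc ∑ z : Fin n → ZMod Q, (univ.filter fun c => P (z, c)).card
        ≤ ∑ z : Fin n → ZMod Q, (K + if z = 0 then Q ^ n else 0) :=
          Finset.sum_le_sum fun z _ => hstep z
      _ = Q ^ n * K + Q ^ n := by
          rw [Finset.sum_add_distrib, Finset.sum_const, card_univ, card_fun_eq, smul_eq_mul]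
          congr 1
          simp

  -- lower bound in ℕ
  have hlower : Q ^ n * K ≤ (univ.filter P).card + K + N * (K * K) + N * (K * K) := by
    have hperz : ∀ z : Fin n → ZMod Q, z ≠ 0 →
        K ≤ (univ.filter fun c => P (z, c)).card
            + (∑ i : Fin N, if (∑ j, z j * v i j) = 0 then K else 0)
            + ∑ i ∈ univ.filter (fun i : Fin N => i ≠ i0),
                (if (∑ j, z j * (y i j - y i0 j)) = 0 then K else 0) := by
      intro z hz
      have hsub : (univ.filter fun c : Fin n → ZMod Q => ∑ j, z j * (y i0 j + c j) = 0)
          ⊆ ((univ.filter fun c => P (z, c))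
            ∪ univ.biUnion (fun i : Fin N => univ.filter fun c : Fin n → ZMod Q =>
                (∑ j, z j * (y i0 j + c j)) = 0 ∧ (∑ j, z j * v i j) = 0))
            ∪ (univ.filter fun i : Fin N => i ≠ i0).biUnion (fun i =>
                univ.filter fun c : Fin n → ZMod Q =>
                (∑ j, z j * (y i0 j + c j)) = 0 ∧ (∑ j, z j * (y i j + c j)) = 0) := by
        intro c hc
        simp only [mem_filter, mem_univ, true_and] at hc
        by_cases hB : ∀ i : Fin N, (∑ j, z j * v i j) ≠ 0
        · by_cases hC : ∀ i : Fin N, i ≠ i0 → (∑ j, z j * (y i j + c j)) ≠ 0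
          · refine mem_union_left _ (mem_union_left _ ?_)
            simp only [mem_filter, mem_univ, true_and, hP]
            exact ⟨hc, hB, hC⟩
          · push_neg at hC
            obtain ⟨i, hi, hieq⟩ := hC
            refine mem_union_right _ ?_
            rw [mem_biUnion]
            exact ⟨i, by simp [hi], by simp [hc, hieq]⟩
        · push_neg at hB
          obtain ⟨i, hieq⟩ := hB
          refine mem_union_left _ (mem_union_right _ ?_)
          rw [mem_biUnion]
          exact ⟨i, mem_univ i, by simp [hc, hieq]⟩
      have h1 := Finset.card_le_card hsub
      rw [hc1 z hz] at h1
      refine h1.trans ?_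
      refine (Finset.card_union_le _ _).trans ?_
      have h2 : ((univ.filter fun c => P (z, c))
            ∪ univ.biUnion (fun i : Fin N => univ.filter fun c : Fin n → ZMod Q =>
                (∑ j, z j * (y i0 j + c j)) = 0 ∧ (∑ j, z j * v i j) = 0)).card
          ≤ (univ.filter fun c => P (z, c)).card
            + ∑ i : Fin N, (if (∑ j, z j * v i j) = 0 then K else 0) := by
        refine (Finset.card_union_le _ _).trans ?_
        refine Nat.add_le_add_left ?_ _
        refine (Finset.card_biUnion_le).trans ?_
        refine Finset.sum_le_sum fun i _ => ?_
        by_cases h : (∑ j, z j * v i j) = 0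
        · rw [if_pos h, ← hc1 z hz]
          apply Finset.card_le_card
          intro c hcm
          simp only [mem_filter, mem_univ, true_and] at hcm ⊢
          exact hcm.1
        · rw [if_neg h]
          refine le_of_eq (Finset.card_eq_zero.mpr ?_)
          refine Finset.filter_eq_empty_iff.mpr fun c _ => ?_
          intro hcontra
          exact h hcontra.2
      have h3 : ((univ.filter fun i : Fin N => i ≠ i0).biUnion (fun i =>
                univ.filter fun c : Fin n → ZMod Q =>
                (∑ j, z j * (y i0 j + c j)) = 0 ∧ (∑ j, z j * (y i j + c j)) = 0)).card
          ≤ ∑ i ∈ univ.filter (fun i : Fin N => i ≠ i0),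
                (if (∑ j, z j * (y i j - y i0 j)) = 0 then K else 0) := by
        refine (Finset.card_biUnion_le).trans ?_
        refine Finset.sum_le_sum fun i _ => ?_
        by_cases h : (∑ j, z j * (y i j - y i0 j)) = 0
        · rw [if_pos h, ← hc1 z hz]
          apply Finset.card_le_card
          intro c hcm
          simp only [mem_filter, mem_univ, true_and] at hcm ⊢
          exact hcm.1
        · rw [if_neg h]
          refine le_of_eq (Finset.card_eq_zero.mpr ?_)
          refine Finset.filter_eq_empty_iff.mpr fun c _ => ?_
          intro hcontra
          apply h
          have hrw : ∑ j, z j * (y i j - y i0 j)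
              = (∑ j, z j * (y i j + c j)) - ∑ j, z j * (y i0 j + c j) := by
            rw [← Finset.sum_sub_distrib]
            exact Finset.sum_congr rfl fun j _ => by ring
          rw [hrw, hcontra.1, hcontra.2, sub_zero]
      exact Nat.add_le_add h2 h3
    -- sum over nonzero z
    set E : Finset (Fin n → ZMod Q) := univ.erase 0 with hE
    have hEcard : E.card = Q ^ n - 1 := by
      rw [hE, card_erase_of_mem (mem_univ 0), card_univ, card_fun_eq]
    have hstep : ∑ z ∈ E, K ≤ ∑ z ∈ E, ((univ.filter fun c => P (z, c)).card
            + (∑ i : Fin N, if (∑ j, z j * v i j) = 0 then K else 0)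
            + ∑ i ∈ univ.filter (fun i : Fin N => i ≠ i0),
                (if (∑ j, z j * (y i j - y i0 j)) = 0 then K else 0)) :=
      Finset.sum_le_sum fun z hzE => hperz z (Finset.mem_erase.mp hzE).1
    rw [Finset.sum_const, hEcard, smul_eq_mul] at hstep
    rw [Finset.sum_add_distrib, Finset.sum_add_distrib] at hstep
    have hA : ∑ z ∈ E, (univ.filter fun c => P (z, c)).card ≤ (univ.filter P).card := by
      rw [card_prod_filter]
      exact Finset.sum_le_sum_of_subset (subset_univ _)
    have hB : ∑ z ∈ E, (∑ i : Fin N, if (∑ j, z j * v i j) = 0 then K else 0)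
        ≤ N * (K * K) := by
      rw [Finset.sum_comm]
      calc ∑ i : Fin N, ∑ z ∈ E, (if (∑ j, z j * v i j) = 0 then K else 0)
          ≤ ∑ i : Fin N, (K * K) := by
            refine Finset.sum_le_sum fun i _ => ?_
            calc ∑ z ∈ E, (if (∑ j, z j * v i j) = 0 then K else 0)
                ≤ ∑ z : Fin n → ZMod Q, (if (∑ j, z j * v i j) = 0 then K else 0) :=
                  Finset.sum_le_sum_of_subset (subset_univ _)
              _ = ∑ z ∈ univ.filter (fun z : Fin n → ZMod Q => (∑ j, z j * v i j) = 0), K :=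
                  (Finset.sum_filter _ _).symm
              _ = K * K := by
                  rw [Finset.sum_const, card_fiber hQ (v i) (hv i) 0, smul_eq_mul]
        _ = N * (K * K) := by rw [Finset.sum_const, card_univ, Fintype.card_fin, smul_eq_mul]
    have hC : ∑ z ∈ E, (∑ i ∈ univ.filter (fun i : Fin N => i ≠ i0),
          (if (∑ j, z j * (y i j - y i0 j)) = 0 then K else 0)) ≤ N * (K * K) := by
      rw [Finset.sum_comm]
      calc ∑ i ∈ univ.filter (fun i : Fin N => i ≠ i0),
            ∑ z ∈ E, (if (∑ j, z j * (y i j - y i0 j)) = 0 then K else 0)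
          ≤ ∑ i ∈ univ.filter (fun i : Fin N => i ≠ i0), (K * K) := by
            refine Finset.sum_le_sum fun i hi => ?_
            have hine : i ≠ i0 := (Finset.mem_filter.mp hi).2
            have hw : (fun j => y i j - y i0 j) ≠ 0 := by
              intro h
              apply hy i hine
              funext j
              have := congrFun h j
              simpa [sub_eq_zero] using this
            calc ∑ z ∈ E, (if (∑ j, z j * (y i j - y i0 j)) = 0 then K else 0)
                ≤ ∑ z : Fin n → ZMod Q, (if (∑ j, z j * (y i j - y i0 j)) = 0 then K else 0) :=
                  Finset.sum_le_sum_of_subset (subset_univ _)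
              _ = ∑ z ∈ univ.filter (fun z : Fin n → ZMod Q =>
                    (∑ j, z j * (y i j - y i0 j)) = 0), K :=
                  (Finset.sum_filter _ _).symm
              _ = K * K := by
                  rw [Finset.sum_const, card_fiber hQ (fun j => y i j - y i0 j) hw 0, smul_eq_mul]
        _ ≤ N * (K * K) := by
            rw [Finset.sum_const, smul_eq_mul]
            exact Nat.mul_le_mul_right _ ((Finset.card_filter_le _ _).trans (by simp))
    have h1K : 1 ≤ Q ^ n := Nat.one_le_pow _ _ hQ.pos
    have hsplit : Q ^ n * K = (Q ^ n - 1) * K + K := by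
      calc Q ^ n * K = ((Q ^ n - 1) + 1) * K := by rw [Nat.sub_add_cancel h1K]
        _ = (Q ^ n - 1) * K + K := by ring
    rw [hsplit]
    have hfin := le_trans hstep (Nat.add_le_add (Nat.add_le_add hA hB) hC)
    linarith

  -- real arithmetic
  set C : ℕ := (univ.filter P).card with hCdef
  set k : ℝ := (Q : ℝ) ^ (n - 1) with hkdef
  have hq2 : (2:ℝ) ≤ (Q:ℝ) := by exact_mod_cast hQ.two_le
  have hq0 : (0:ℝ) < (Q:ℝ) := by linarith
  have hk1 : (1:ℝ) ≤ k := by rw [hkdef]; exact one_le_pow₀ (by linarith)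
  have hk0 : (0:ℝ) < k := by linarith
  have hqn : ((Q:ℝ)) ^ n = (Q:ℝ) * k := by
    rw [hkdef]
    conv_lhs => rw [show n = (n - 1) + 1 from (Nat.succ_pred_eq_of_pos (Nat.pos_of_ne_zero hn)).symm]
    rw [pow_succ]; ring
  have hqnpos : (0:ℝ) < (Q:ℝ) ^ n := by positivity
  have hCupper : (C:ℝ) ≤ (Q:ℝ) ^ n * k + (Q:ℝ) ^ n := by
    rw [hkdef]; exact_mod_cast hupper
  have hClower : (Q:ℝ) ^ n * k ≤ (C:ℝ) + k + N * (k * k) + N * (k * k) := by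
    rw [hkdef]; exact_mod_cast hlower
  have hN1 : (1:ℝ) ≤ (N:ℝ) := by exact_mod_cast hN
  have hC0 : (0:ℝ) ≤ (C:ℝ) := Nat.cast_nonneg _
  constructor
  · rw [le_div_iff₀ (by positivity)]
    have expand : (1 / (Q:ℝ) - 2 * N / (Q:ℝ) ^ 2 - N / (Q:ℝ) ^ n) * ((Q:ℝ) ^ n * (Q:ℝ) ^ n)
        = (Q:ℝ) ^ n * k - 2 * N * (k * k) - N * (Q:ℝ) ^ n := by
      rw [hqn]; field_simp
    rw [expand]
    have h1 : k ≤ (Q:ℝ) ^ n := by nlinarith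
    have hkle : k ≤ (N:ℝ) * (Q:ℝ) ^ n := by nlinarith
    linarith
  · rw [div_le_iff₀ (by positivity)]
    have expand : (1 / (Q:ℝ) + 1 / (Q:ℝ) ^ n) * ((Q:ℝ) ^ n * (Q:ℝ) ^ n)
        = (Q:ℝ) ^ n * k + (Q:ℝ) ^ n := by
      rw [hqn]; field_simp
    rw [expand]
    exact hCupper
end

section
/- Let $1 \le p < \infty$, let $C_p := 2^p \Gamma(1 + 1/p)^p$ be the normalizing constant so that $\int_{\mathbb{R}^m} e^{-C_p\|\vec{x}\|_p^p}\,d\vec{x} = 1$, and let $D^{(p)}$ be the continuous distribution on $\mathbb{R}^m$ with density $e^{-C_p \|\vec{x}\|_p^p}$. Then for any $\vec{y} \in \mathbb{R}^m$, any $1 \le q \le \infty$, and any $\varepsilon \in (0, 1/100)$, with $r := 10\log^{1/p}(1/\varepsilon)/C_p^{1/p}$, we have $\Pr_{\vec{X} \sim D^{(p)}}[\|\vec{X} - \vec{y}\|_q \le m^{1/q} r] \ge e^{-\varepsilon m - C_p \|\vec{y}\|_p^p}$. -/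
open scoped ENNReal
open MeasureTheory

open Real Set


lemma gamma_aux {p : ℝ} (hp : 1 ≤ p) : Real.Gamma (1 + 1 / p) ≤ 1 := by
  have hp0 : 0 < p := lt_of_lt_of_le one_pos hp
  have hs0 : 0 ≤ 1 / p := by positivity
  have hs1 : 1 / p ≤ 1 := by
    rw [div_le_one hp0]; exact hp
  have h := Real.convexOn_Gamma.2 (mem_Ioi.mpr one_pos) (mem_Ioi.mpr two_pos)
    (by linarith : (0:ℝ) ≤ 1 - 1/p) hs0 (by ring)
  simp only [smul_eq_mul, mul_one, Real.Gamma_one, Real.Gamma_two] at h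
  calc Real.Gamma (1 + 1/p) = Real.Gamma ((1 - 1/p) * 1 + (1/p) * 2) := by ring_nf
    _ ≤ (1 - 1/p) * 1 + 1/p * 1 := by simpa using h
    _ = 1 := by ring

lemma Cp_rpow {p : ℝ} (hp : 1 ≤ p) {Cp : ℝ}
    (hCp : Cp = 2 ^ p * Real.Gamma (1 + 1 / p) ^ p) :
    Cp ^ (1 / p) = 2 * Real.Gamma (1 + 1 / p) := by
  have hp0 : 0 < p := lt_of_lt_of_le one_pos hp
  have hΓ : 0 < Real.Gamma (1 + 1 / p) := Real.Gamma_pos_of_pos (by positivity)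
  rw [hCp, Real.mul_rpow (by positivity) (by positivity), ← Real.rpow_mul (by norm_num),
    ← Real.rpow_mul hΓ.le, mul_one_div_cancel hp0.ne', Real.rpow_one, Real.rpow_one]


lemma intOn_Ioi {p b : ℝ} (hp : 1 ≤ p) (hb : 0 < b) :
    IntegrableOn (fun t : ℝ => Real.exp (-b * t ^ p)) (Ioi 0) := by
  have := integrableOn_rpow_mul_exp_neg_mul_rpow (p := p) (s := 0) (b := b) (by norm_num) (lt_of_lt_of_le one_pos hp) hb
  refine this.congr_fun ?_ measurableSet_Ioi
  intro x hx
  simp [Real.rpow_zero]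

lemma int_even {p b : ℝ} (hp : 1 ≤ p) (hb : 0 < b) :
    Integrable (fun t : ℝ => Real.exp (-b * |t| ^ p)) := by
  have hIoi : IntegrableOn (fun t : ℝ => Real.exp (-b * |t| ^ p)) (Ioi 0) := by
    refine (intOn_Ioi hp hb).congr_fun (fun x hx => ?_) measurableSet_Ioi
    rw [abs_of_pos hx]
  rw [← integrableOn_univ, ← @Iio_union_Ici _ _ (0 : ℝ), integrableOn_union,
    integrableOn_Ici_iff_integrableOn_Ioi]
  refine ⟨?_, hIoi⟩
  rw [← (Measure.measurePreserving_neg (volume : Measure ℝ)).integrableOn_comp_preimage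
      (Homeomorph.neg ℝ).measurableEmbedding]
  simp only [Function.comp_def, abs_neg, neg_preimage, neg_Iio, neg_neg, neg_zero]
  exact hIoi

lemma integral_Ioi_eq {p b : ℝ} (hp : 1 ≤ p) (hb : 0 < b) :
    ∫ t in Ioi (0:ℝ), Real.exp (-b * t ^ p) = b ^ (-1/p) * Real.Gamma (1/p + 1) :=
  integral_exp_neg_mul_rpow (lt_of_lt_of_le one_pos hp) hb




section
variable {p Cp : ℝ} (hp : 1 ≤ p) (hCp : Cp = 2 ^ p * Real.Gamma (1 + 1 / p) ^ p)
include hp hCp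

lemma Cp_pos : 0 < Cp := by
  have hp0 : 0 < p := lt_of_lt_of_le one_pos hp
  have hΓ : 0 < Real.Gamma (1 + 1 / p) := Real.Gamma_pos_of_pos (by positivity)
  rw [hCp]; positivity

lemma Gamma_pos' : 0 < Real.Gamma (1 + 1 / p) :=
  Real.Gamma_pos_of_pos (by have : 0 < p := lt_of_lt_of_le one_pos hp; positivity)

lemma half_int : ∫ t in Ioi (0:ℝ), Real.exp (-Cp * t ^ p) = 1 / 2 := by
  have hp0 : 0 < p := lt_of_lt_of_le one_pos hp
  have hΓ := Gamma_pos' hp hCp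
  have hCp0 := Cp_pos hp hCp
  rw [integral_exp_neg_mul_rpow hp0 hCp0, neg_div, Real.rpow_neg hCp0.le,
    Cp_rpow hp hCp, add_comm (1/p) 1]
  field_simp

lemma tail_le {s : ℝ} (hs : 0 < s) :
    ∫ t in Ioi s, Real.exp (-Cp * t ^ p) ≤ Real.exp (-(Cp * s ^ p) / 2) := by
  have hp0 : 0 < p := lt_of_lt_of_le one_pos hp
  have hΓ := Gamma_pos' hp hCp
  have hCp0 := Cp_pos hp hCp
  have h2 : 0 < Cp / 2 := by linarith
  have key : ∀ x ∈ Ioi s, Real.exp (-Cp * x ^ p) ≤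
      Real.exp (-(Cp * s ^ p) / 2) * Real.exp (-(Cp/2) * x ^ p) := by
    intro x hx
    rw [← Real.exp_add, Real.exp_le_exp]
    have hxp : s ^ p ≤ x ^ p := Real.rpow_le_rpow hs.le (le_of_lt hx) hp0.le
    nlinarith
  have i1 : IntegrableOn (fun t : ℝ => Real.exp (-Cp * t ^ p)) (Ioi s) :=
    (intOn_Ioi hp hCp0).mono_set (Ioi_subset_Ioi hs.le)
  have i2 : IntegrableOn (fun t : ℝ =>
      Real.exp (-(Cp * s ^ p) / 2) * Real.exp (-(Cp/2) * t ^ p)) (Ioi s) :=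
    ((intOn_Ioi hp h2).mono_set (Ioi_subset_Ioi hs.le)).const_mul _
  calc ∫ t in Ioi s, Real.exp (-Cp * t ^ p)
      ≤ ∫ t in Ioi s, Real.exp (-(Cp * s ^ p) / 2) * Real.exp (-(Cp/2) * t ^ p) :=
        setIntegral_mono_on i1 i2 measurableSet_Ioi key
    _ = Real.exp (-(Cp * s ^ p) / 2) * ∫ t in Ioi s, Real.exp (-(Cp/2) * t ^ p) := by
        rw [integral_const_mul]
    _ ≤ Real.exp (-(Cp * s ^ p) / 2) * 1 := by
        gcongr
        calc ∫ t in Ioi s, Real.exp (-(Cp/2) * t ^ p)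
            ≤ ∫ t in Ioi (0:ℝ), Real.exp (-(Cp/2) * t ^ p) := by
              refine setIntegral_mono_set (intOn_Ioi hp h2) ?_
                (HasSubset.Subset.eventuallyLE (Ioi_subset_Ioi hs.le))
              filter_upwards with x using (Real.exp_pos _).le
          _ = (Cp/2) ^ (-1/p) * Real.Gamma (1/p + 1) := integral_exp_neg_mul_rpow hp0 h2
          _ ≤ 1 := by
              rw [neg_div, Real.rpow_neg h2.le, Real.div_rpow hCp0.le (by norm_num),
                Cp_rpow hp hCp, add_comm (1/p) 1]
              have h21 : (2:ℝ) ^ (1/p) ≤ 2 ^ (1:ℝ) :=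
                Real.rpow_le_rpow_of_exponent_le one_le_two (by
                  rw [div_le_one hp0]; exact hp)
              rw [Real.rpow_one] at h21
              have hx : (0:ℝ) < 2 ^ (1/p) := Real.rpow_pos_of_pos two_pos _
              have heq : (2 * Real.Gamma (1+1/p) / (2:ℝ) ^ (1/p))⁻¹ * Real.Gamma (1+1/p)
                  = 2 ^ (1/p) / 2 := by
                field_simp
              rw [heq]
              linarith
    _ = Real.exp (-(Cp * s ^ p) / 2) := mul_one _

end




set_option maxHeartbeats 1000000 in
lemma coord {p Cp r ε : ℝ} (hp : 1 ≤ p)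
    (hCp : Cp = 2 ^ p * Real.Gamma (1 + 1 / p) ^ p)
    (hε : 0 < ε) (hε' : ε < 1 / 100)
    (hr : r = 10 * Real.log (1 / ε) ^ (1 / p) / Cp ^ (1 / p)) (y : ℝ) :
    Real.exp (-ε - Cp * |y| ^ p) ≤ ∫ t in Icc (y - r) (y + r), Real.exp (-Cp * |t| ^ p) := by
  have hp0 : 0 < p := lt_of_lt_of_le one_pos hp
  have hΓ := Gamma_pos' hp hCp
  have hCp0 := Cp_pos hp hCp
  have hc := Cp_rpow hp hCp
  have hcpos : (0:ℝ) < Cp ^ (1/p) := Real.rpow_pos_of_pos hCp0 _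
  have hcle : Cp ^ (1/p) ≤ 2 := by
    rw [hc]; nlinarith [gamma_aux hp]
  set L := Real.log (1 / ε) with hL_def
  have h100 : (100:ℝ) < 1 / ε := by
    rw [lt_div_iff₀ hε]; linarith
  have hL : 1 ≤ L := by
    rw [hL_def, Real.le_log_iff_exp_le (by linarith)]
    have := Real.exp_one_lt_d9
    linarith
  have hLp : 1 ≤ L ^ (1/p) := Real.one_le_rpow hL (by positivity)
  have hr5 : 5 ≤ r := by
    rw [hr]
    calc (5:ℝ) = 10 * 1 / 2 := by norm_num
      _ ≤ 10 * L ^ (1/p) / Cp ^ (1/p) := by gcongr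
  have hr0 : 0 < r := by linarith
  have hεL : Real.exp (-L) = ε := by
    rw [Real.exp_neg, Real.exp_log (by positivity), one_div, inv_inv]
  have hint : Integrable (fun t : ℝ => Real.exp (-Cp * |t| ^ p)) := int_even hp hCp0
  have hnonneg : ∀ᵐ t ∂(volume : Measure ℝ), 0 ≤ Real.exp (-Cp * |t| ^ p) := by
    filter_upwards with t using (Real.exp_pos _).le
  rcases le_or_gt |y| (r/2) with hcase | hcase
  · -- central case
    have ha : (0:ℝ) < r/2 := by linarith
    -- tail bound
    have hrp : Cp * (r/2) ^ p = 5 ^ p * L := by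
      have hL0 : (0:ℝ) ≤ L := by linarith
      have e1 : (L ^ (1/p)) ^ p = L := by
        rw [← Real.rpow_mul hL0, one_div_mul_cancel hp0.ne', Real.rpow_one]
      have e2 : (Cp ^ (1/p)) ^ p = Cp := by
        rw [← Real.rpow_mul hCp0.le, one_div_mul_cancel hp0.ne', Real.rpow_one]
      have hhalf : r / 2 = 5 * L ^ (1/p) / Cp ^ (1/p) := by rw [hr]; ring
      rw [hhalf, Real.div_rpow (by positivity) hcpos.le,
        Real.mul_rpow (by norm_num) (by positivity), e1, e2]
      field_simp
    have h5 : (5:ℝ) ≤ 5 ^ p := by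
      have := Real.rpow_le_rpow_of_exponent_le (by norm_num : (1:ℝ) ≤ 5) hp
      rwa [Real.rpow_one] at this
    have tail2 : ∫ t in Ioi (r/2), Real.exp (-Cp * t ^ p) ≤ ε ^ 2 := by
      have h1 := tail_le hp hCp ha
      rw [hrp] at h1
      have h2 : Real.exp (-(5 ^ p * L) / 2) ≤ Real.exp (-(2 * L)) := by
        rw [Real.exp_le_exp]; nlinarith
      have h3 : Real.exp (-(2 * L)) = ε ^ 2 := by
        rw [show -(2*L) = -L + -L by ring, Real.exp_add, hεL]; ring
      linarith
    -- decomposition of the total integral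
    have htot : ∫ t : ℝ, Real.exp (-Cp * |t| ^ p) = 1 := by
      rw [integral_comp_abs (f := fun t => Real.exp (-Cp * t ^ p)), half_int hp hCp]
      norm_num
    set a := r/2 with ha_def
    have hsym : ∫ t in Iio (-a), Real.exp (-Cp * |t| ^ p)
        = ∫ t in Ioi a, Real.exp (-Cp * |t| ^ p) := by
      rw [setIntegral_congr_set (Iio_ae_eq_Iic (a := -a)),
        ← integral_comp_neg_Ioi a (fun t => Real.exp (-Cp * |t| ^ p))]
      simp [abs_neg]
    have hsplit1 : ∫ t in Iic a, Real.exp (-Cp * |t| ^ p)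
        = (∫ t in Iio (-a), Real.exp (-Cp * |t| ^ p))
          + ∫ t in Icc (-a) a, Real.exp (-Cp * |t| ^ p) := by
      rw [← setIntegral_union ((Iio_disjoint_Ici le_rfl).mono_right Icc_subset_Ici_self)
        measurableSet_Icc hint.integrableOn hint.integrableOn,
        Iio_union_Icc_eq_Iic (by linarith : -a ≤ a)]
    have hsplit2 : (1:ℝ) = (∫ t in Iic a, Real.exp (-Cp * |t| ^ p))
        + ∫ t in Ioi a, Real.exp (-Cp * |t| ^ p) := by
      rw [← htot, ← setIntegral_union (Iic_disjoint_Ioi le_rfl) measurableSet_Ioi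
        hint.integrableOn hint.integrableOn, Iic_union_Ioi, setIntegral_univ]
    have htail_eq : ∫ t in Ioi a, Real.exp (-Cp * |t| ^ p)
        = ∫ t in Ioi a, Real.exp (-Cp * t ^ p) := by
      refine setIntegral_congr_fun measurableSet_Ioi (fun x hx => ?_)
      rw [abs_of_pos (lt_trans ha hx)]
    have hA : (1:ℝ) - 2 * ε ^ 2 ≤ ∫ t in Icc (-a) a, Real.exp (-Cp * |t| ^ p) := by
      have := tail2
      rw [htail_eq] at hsym
      linarith [hsplit1, hsplit2, hsym, htail_eq ▸ tail2]
    have hsub : Icc (-a) a ⊆ Icc (y - r) (y + r) := by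
      obtain ⟨h1, h2⟩ := abs_le.mp hcase
      exact Icc_subset_Icc (by rw [ha_def] at *; linarith) (by rw [ha_def] at *; linarith)
    have hmono : ∫ t in Icc (-a) a, Real.exp (-Cp * |t| ^ p)
        ≤ ∫ t in Icc (y - r) (y + r), Real.exp (-Cp * |t| ^ p) :=
      setIntegral_mono_set hint.integrableOn
        (hnonneg.filter_mono (ae_mono Measure.restrict_le_self)) hsub.eventuallyLE
    have hexp : Real.exp (-ε - Cp * |y| ^ p) ≤ 1 - 2 * ε ^ 2 := by
      have h1 : Real.exp (-ε - Cp * |y| ^ p) ≤ Real.exp (-ε) := by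
        rw [Real.exp_le_exp]
        have : (0:ℝ) ≤ Cp * |y| ^ p := by positivity
        linarith
      have hmul : Real.exp (-ε) * Real.exp ε = 1 := by
        rw [← Real.exp_add]; simp
      nlinarith [Real.add_one_le_exp ε, Real.exp_pos (-ε), Real.exp_pos ε,
        mul_le_mul_of_nonneg_left (Real.add_one_le_exp ε) (Real.exp_pos (-ε)).le]
    linarith
  · -- far case
    rcases le_or_gt 0 y with hy | hy
    · have hyy : |y| = y := abs_of_nonneg hy
      have hygt : r/2 < y := by rwa [hyy] at hcase
      have hJs : Icc (y - 1) y ⊆ Icc (y - r) (y + r) :=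
        Icc_subset_Icc (by linarith) (by linarith)
      have hconst : ∀ t ∈ Icc (y - 1) y, Real.exp (-Cp * |y| ^ p) ≤ Real.exp (-Cp * |t| ^ p) := by
        intro t ht
        obtain ⟨ht1, ht2⟩ := ht
        have ht0 : 0 ≤ t := by linarith
        rw [Real.exp_le_exp]
        have : |t| ≤ |y| := by rw [hyy, abs_of_nonneg ht0]; exact ht2
        have := Real.rpow_le_rpow (abs_nonneg t) this hp0.le
        nlinarith
      have hvol : (volume (Icc (y - 1) y)).toReal = 1 := by
        rw [Real.volume_Icc, show y - (y - 1) = 1 by ring]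
        simp
      have h1 := setIntegral_ge_of_const_le measurableSet_Icc measure_Icc_lt_top.ne hconst
        (hint.integrableOn.mono_set hJs)
      rw [measureReal_def, hvol, one_smul] at h1
      have h2 : ∫ t in Icc (y - 1) y, Real.exp (-Cp * |t| ^ p)
          ≤ ∫ t in Icc (y - r) (y + r), Real.exp (-Cp * |t| ^ p) :=
        setIntegral_mono_set hint.integrableOn
          (hnonneg.filter_mono (ae_mono Measure.restrict_le_self)) hJs.eventuallyLE
      have h3 : Real.exp (-ε - Cp * |y| ^ p) ≤ Real.exp (-Cp * |y| ^ p) := by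
        rw [Real.exp_le_exp]; linarith
      linarith
    · have hyy : |y| = -y := abs_of_neg hy
      have hygt : r/2 < -y := by rwa [hyy] at hcase
      have hJs : Icc y (y + 1) ⊆ Icc (y - r) (y + r) :=
        Icc_subset_Icc (by linarith) (by linarith)
      have hconst : ∀ t ∈ Icc y (y + 1), Real.exp (-Cp * |y| ^ p) ≤ Real.exp (-Cp * |t| ^ p) := by
        intro t ht
        obtain ⟨ht1, ht2⟩ := ht
        have ht0 : t ≤ 0 := by linarith
        rw [Real.exp_le_exp]
        have : |t| ≤ |y| := by rw [hyy, abs_of_nonpos ht0]; linarith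
        have := Real.rpow_le_rpow (abs_nonneg t) this hp0.le
        nlinarith
      have hvol : (volume (Icc y (y + 1))).toReal = 1 := by
        rw [Real.volume_Icc, show y + 1 - y = 1 by ring]
        simp
      have h1 := setIntegral_ge_of_const_le measurableSet_Icc measure_Icc_lt_top.ne hconst
        (hint.integrableOn.mono_set hJs)
      rw [measureReal_def, hvol, one_smul] at h1
      have h2 : ∫ t in Icc y (y + 1), Real.exp (-Cp * |t| ^ p)
          ≤ ∫ t in Icc (y - r) (y + r), Real.exp (-Cp * |t| ^ p) :=
        setIntegral_mono_set hint.integrableOn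
          (hnonneg.filter_mono (ae_mono Measure.restrict_le_self)) hJs.eventuallyLE
      have h3 : Real.exp (-ε - Cp * |y| ^ p) ≤ Real.exp (-Cp * |y| ^ p) := by
        rw [Real.exp_le_exp]; linarith
      linarith






set_option maxHeartbeats 1000000 in
theorem stmt_15 (m : ℕ) (p : ℝ) (hp : 1 ≤ p) (q : ℝ≥0∞) (hq : 1 ≤ q)
    (y : Fin m → ℝ) (ε : ℝ) (hε : 0 < ε) (hε' : ε < 1 / 100)
    (Cp r : ℝ) (hCp : Cp = 2 ^ p * Real.Gamma (1 + 1 / p) ^ p)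
    (hr : r = 10 * Real.log (1 / ε) ^ (1 / p) / Cp ^ (1 / p)) :
    Real.exp (-ε * m - Cp * lpnorm (ENNReal.ofReal p) y ^ p) ≤
      ∫ x in {x : Fin m → ℝ | lpnorm q (x - y) ≤ (m : ℝ) ^ (1 / q).toReal * r},
        Real.exp (-Cp * lpnorm (ENNReal.ofReal p) x ^ p) := by
  have hp0 : 0 < p := lt_of_lt_of_le one_pos hp
  have hCp0 : 0 < Cp := Cp_pos hp hCp
  have h100 : (100:ℝ) < 1 / ε := by
    rw [lt_div_iff₀ hε]; linarith
  have hL : 1 ≤ Real.log (1 / ε) := by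
    rw [Real.le_log_iff_exp_le (by linarith)]
    have := Real.exp_one_lt_d9
    linarith
  have hr0 : 0 ≤ r := by
    rw [hr]
    have h1 : (0:ℝ) ≤ Real.log (1 / ε) := by linarith
    positivity
  -- rewrite lpnorm p powers
  have lp_pow : ∀ {n : ℕ} (x : Fin n → ℝ),
      lpnorm (ENNReal.ofReal p) x ^ p = ∑ i, |x i| ^ p := by
    intro n x
    have hsum : (0:ℝ) ≤ ∑ i, |x i| ^ p :=
      Finset.sum_nonneg fun i _ => Real.rpow_nonneg (abs_nonneg _) _
    rw [lpnorm, if_neg ENNReal.ofReal_ne_top, ENNReal.toReal_ofReal hp0.le,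
      ← Real.rpow_mul hsum, one_div_mul_cancel hp0.ne', Real.rpow_one]
  have hfx : ∀ x : Fin m → ℝ, Real.exp (-Cp * lpnorm (ENNReal.ofReal p) x ^ p)
      = ∏ i, Real.exp (-Cp * |x i| ^ p) := by
    intro x
    rw [lp_pow x, Finset.mul_sum, ← Real.exp_sum]
  -- the box
  set B : Set (Fin m → ℝ) := Set.pi univ (fun i => Icc (y i - r) (y i + r)) with hB_def
  have hBmeas : MeasurableSet B := MeasurableSet.univ_pi fun i => measurableSet_Icc
  have hBS : B ⊆ {x : Fin m → ℝ | lpnorm q (x - y) ≤ (m : ℝ) ^ (1 / q).toReal * r} := by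
    intro x hx
    have habs : ∀ i, |x i - y i| ≤ r := by
      intro i
      have := hx i (mem_univ i)
      rw [abs_le]
      constructor <;> [linarith [this.1]; linarith [this.2]]
    simp only [mem_setOf_eq]
    rcases eq_or_ne q ⊤ with hqt | hqt
    · subst hqt
      rw [lpnorm, if_pos rfl]
      have : (1 / (⊤:ℝ≥0∞)).toReal = 0 := by simp
      rw [this, Real.rpow_zero, one_mul]
      rcases isEmpty_or_nonempty (Fin m) with hm | hm
      · rw [Real.iSup_of_isEmpty]; exact hr0
      · exact ciSup_le fun i => by simpa using habs i
    · have hqt0 : 0 < q.toReal := ENNReal.toReal_pos (by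
        intro h0; rw [h0] at hq; exact absurd hq (by simp)) hqt
      rw [lpnorm, if_neg hqt]
      have h1q : (1 / q).toReal = 1 / q.toReal := by
        rw [one_div, ENNReal.toReal_inv, one_div]
      rw [h1q]
      have hsum : ∑ i, |(x - y) i| ^ q.toReal ≤ (m : ℝ) * r ^ q.toReal := by
        calc ∑ i, |(x - y) i| ^ q.toReal ≤ ∑ _i : Fin m, r ^ q.toReal := by
              refine Finset.sum_le_sum fun i _ => ?_
              exact Real.rpow_le_rpow (abs_nonneg _) (by simpa using habs i) hqt0.le
          _ = (m : ℝ) * r ^ q.toReal := by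
              rw [Finset.sum_const, Finset.card_univ, Fintype.card_fin, nsmul_eq_mul]
      calc (∑ i, |(x - y) i| ^ q.toReal) ^ (1 / q.toReal)
          ≤ ((m : ℝ) * r ^ q.toReal) ^ (1 / q.toReal) := by
            refine Real.rpow_le_rpow ?_ hsum (by positivity)
            exact Finset.sum_nonneg fun i _ => Real.rpow_nonneg (abs_nonneg _) _
        _ = (m : ℝ) ^ (1 / q.toReal) * r := by
            rw [Real.mul_rpow (Nat.cast_nonneg m) (Real.rpow_nonneg hr0 _),
              ← Real.rpow_mul hr0, mul_one_div_cancel hqt0.ne', Real.rpow_one]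
  -- integrability
  have hint1 : Integrable (fun t : ℝ => Real.exp (-Cp * |t| ^ p)) := int_even hp hCp0
  have hF : Integrable (fun x : Fin m → ℝ => ∏ i, Real.exp (-Cp * |x i| ^ p)) :=
    Integrable.fintype_prod (f := fun _ t => Real.exp (-Cp * |t| ^ p)) fun _ => hint1
  -- box integral equals product
  have hbox : ∫ x in B, ∏ i, Real.exp (-Cp * |x i| ^ p)
      = ∏ i, ∫ t in Icc (y i - r) (y i + r), Real.exp (-Cp * |t| ^ p) := by
    rw [← integral_indicator hBmeas]
    have hind : (B.indicator fun x : Fin m → ℝ => ∏ i, Real.exp (-Cp * |x i| ^ p))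
        = fun x => ∏ i, (Icc (y i - r) (y i + r)).indicator
            (fun t => Real.exp (-Cp * |t| ^ p)) (x i) := by
      funext x
      by_cases hx : x ∈ B
      · rw [indicator_of_mem hx]
        exact Finset.prod_congr rfl fun i _ =>
          (indicator_of_mem (hx i (mem_univ i)) fun t => Real.exp (-Cp * |t| ^ p)).symm
      · rw [indicator_of_notMem hx]
        rw [hB_def, Set.mem_univ_pi] at hx
        push_neg at hx
        obtain ⟨i, hi⟩ := hx
        exact (Finset.prod_eq_zero (Finset.mem_univ i) (indicator_of_notMem hi _)).symm
    rw [hind]; refine (integral_fintype_prod_eq_prod (ι := Fin m) (μ := fun _ => volume)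
      (f := fun i => (Icc (y i - r) (y i + r)).indicator (fun t => Real.exp (-Cp * |t| ^ p)))).trans ?_
    exact Finset.prod_congr rfl fun i _ => integral_indicator measurableSet_Icc
  -- assemble
  calc Real.exp (-ε * m - Cp * lpnorm (ENNReal.ofReal p) y ^ p)
      = ∏ i, Real.exp (-ε - Cp * |y i| ^ p) := by
        rw [← Real.exp_sum, lp_pow y]
        congr 1
        rw [Finset.sum_sub_distrib, Finset.sum_const, Finset.card_univ, Fintype.card_fin,
          ← Finset.mul_sum, nsmul_eq_mul]
        ring
    _ ≤ ∏ i, ∫ t in Icc (y i - r) (y i + r), Real.exp (-Cp * |t| ^ p) :=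
        Finset.prod_le_prod (fun i _ => (Real.exp_pos _).le)
          (fun i _ => coord hp hCp hε hε' hr (y i))
    _ = ∫ x in B, ∏ i, Real.exp (-Cp * |x i| ^ p) := hbox.symm
    _ ≤ ∫ x in {x : Fin m → ℝ | lpnorm q (x - y) ≤ (m : ℝ) ^ (1 / q).toReal * r},
          ∏ i, Real.exp (-Cp * |x i| ^ p) := by
        refine setIntegral_mono_set hF.integrableOn ?_ hBS.eventuallyLE
        filter_upwards with x
        exact Finset.prod_nonneg fun i _ => (Real.exp_pos _).le
    _ = ∫ x in {x : Fin m → ℝ | lpnorm q (x - y) ≤ (m : ℝ) ^ (1 / q).toReal * r},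
          Real.exp (-Cp * lpnorm (ENNReal.ofReal p) x ^ p) := by
        exact integral_congr_ae (ae_of_all _ fun x => (hfx x).symm)
end
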